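/- arXiv:1309.1991 — 6 statements merged into one kernel-verified Lean document; each statement's English description precedes it below -/
import Mathlib

section
/- Let H be a complex Hilbert space and let A be a densely defined, closed, symmetric operator in H. Assume that for every z ∈ ℂ with Im z ≠ 0 the orthogonal complement of ran(A − zI) has complex dimension 1 (deficiency indices (1,1)), and that A is completely nonselfadjoint, i.e., ⋂_{z ∈ ℂ \ ℝ} ran(A − zI) = {0}. Then H is a separable Hilbert space. -/
open MeasureTheory Complex

section AuxST1
open Filter Topology

private lemma key_est {H : Type*} [NormedAddCommGroup H] [InnerProductSpace ℂ H]
    {D : Submodule ℂ H} {A : D →ₗ[ℂ] H}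
    (hsymm : ∀ φ ψ : D, (inner ℂ (A φ) (ψ : H) : ℂ) = inner ℂ (φ : H) (A ψ))
    (z : ℂ) (φ : D) : |z.im| * ‖(φ : H)‖ ≤ ‖A φ - z • (φ : H)‖ := by
  set u := A φ with hu
  set v := (φ : H) with hv
  have hre : (inner ℂ u v : ℂ).im = 0 := by
    have h1 : (inner ℂ u v : ℂ) = inner ℂ v u := hsymm φ φ
    have h2 : (starRingEnd ℂ) (inner ℂ u v : ℂ) = inner ℂ u v := by
      rw [inner_conj_symm, ← h1]
    have h3 := congrArg Complex.im h2
    rw [Complex.conj_im] at h3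
    linarith
  have h3 : (inner ℂ (u - z • v) v : ℂ).im = z.im * (‖v‖^2) := by
    rw [inner_sub_left, inner_smul_left]
    have hvv : (inner ℂ v v : ℂ) = ((‖v‖^2 : ℝ) : ℂ) := by
      rw [inner_self_eq_norm_sq_to_K]; norm_cast
    rw [hvv]
    simp [hre, Complex.sub_im, Complex.mul_im]
    norm_num [← Complex.ofReal_pow, Complex.ofReal_re, Complex.ofReal_im]
  have h4 : |z.im| * ‖v‖^2 ≤ ‖u - z • v‖ * ‖v‖ := by
    calc |z.im| * ‖v‖^2 = |(inner ℂ (u - z • v) v : ℂ).im| := by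
          rw [h3, _root_.abs_mul, _root_.abs_of_nonneg (by positivity : (0:ℝ) ≤ ‖v‖^2)]
      _ ≤ ‖(inner ℂ (u - z • v) v : ℂ)‖ := Complex.abs_im_le_norm _
      _ ≤ ‖u - z • v‖ * ‖v‖ := norm_inner_le_norm _ _
  rcases eq_or_lt_of_le (norm_nonneg v) with h | h
  · rw [← h]; simp
  · nlinarith

private lemma graph_lim {H : Type*} [NormedAddCommGroup H] [InnerProductSpace ℂ H]
    [CompleteSpace H] {D : Submodule ℂ H} {A : D →ₗ[ℂ] H}
    (hclosed : IsClosed {p : H × H | ∃ φ : D, p = ((φ : H), A φ)})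
    (hsymm : ∀ φ ψ : D, (inner ℂ (A φ) (ψ : H) : ℂ) = inner ℂ (φ : H) (A ψ))
    {c : ℝ} (hc : 0 < c) (zs : ℕ → ℂ) (w : ℂ) (φs : ℕ → D) (y : H)
    (hzim : ∀ n, c ≤ |(zs n).im|)
    (hz : Tendsto zs atTop (𝓝 w))
    (hy : Tendsto (fun n => A (φs n) - zs n • ((φs n : H))) atTop (𝓝 y)) :
    ∃ φ : D, A φ - w • (φ : H) = y := by
  set Y : ℕ → H := fun n => A (φs n) - zs n • ((φs n : H)) with hY
  -- bound on the φs
  obtain ⟨B, hB⟩ : ∃ B : ℝ, ∀ n, ‖Y n‖ ≤ B := by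
    obtain ⟨B, hB⟩ := (hy.norm.bddAbove_range)
    exact ⟨B, fun n => hB ⟨n, rfl⟩⟩
  have hφB : ∀ n, ‖(φs n : H)‖ ≤ B / c := by
    intro n
    have h1 := key_est hsymm (zs n) (φs n)
    have h2 := hzim n
    have h3 : c * ‖(φs n : H)‖ ≤ ‖Y n‖ :=
      le_trans (by nlinarith [norm_nonneg ((φs n : H))]) h1
    rw [le_div_iff₀ hc]
    nlinarith [hB n]
  -- Cauchy
  have hcauchy : CauchySeq (fun n => ((φs n) : H)) := by
    rw [Metric.cauchySeq_iff]
    intro ε hε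
    have hYc := hy.cauchySeq
    have hzc := hz.cauchySeq
    rw [Metric.cauchySeq_iff] at hYc hzc
    obtain ⟨N1, hN1⟩ := hYc (c * ε / 2) (by positivity)
    obtain ⟨N2, hN2⟩ := hzc (c * ε / (2 * (B / c + 1))) (by
      have : (0:ℝ) ≤ B / c := le_trans (norm_nonneg _) (hφB 0)
      positivity)
    refine ⟨max N1 N2, fun m hm n hn => ?_⟩
    have key : A (φs m - φs n) - zs m • ((φs m - φs n : D) : H)
        = Y m - Y n + (zs m - zs n) • ((φs n : H)) := by
      simp only [hY, map_sub, Submodule.coe_sub]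
      module
    have hnorm : c * ‖((φs m - φs n : D) : H)‖ ≤ ‖Y m - Y n‖ + ‖zs m - zs n‖ * (B / c) := by
      have h1 := key_est hsymm (zs m) (φs m - φs n)
      have h2 := hzim m
      calc c * ‖((φs m - φs n : D) : H)‖
          ≤ |(zs m).im| * ‖((φs m - φs n : D) : H)‖ := by nlinarith [norm_nonneg ((φs m - φs n : D) : H)]
        _ ≤ ‖A (φs m - φs n) - zs m • ((φs m - φs n : D) : H)‖ := h1
        _ = ‖Y m - Y n + (zs m - zs n) • ((φs n : H))‖ := by rw [key]
        _ ≤ ‖Y m - Y n‖ + ‖zs m - zs n‖ * (B / c) := by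
            have hs : ‖(zs m - zs n) • ((φs n : H))‖ ≤ ‖zs m - zs n‖ * (B / c) := by
              rw [norm_smul]
              exact mul_le_mul_of_nonneg_left (hφB n) (norm_nonneg _)
            linarith [norm_add_le (Y m - Y n) ((zs m - zs n) • ((φs n : H)))]
    have e1 : dist (Y m) (Y n) < c * ε / 2 := hN1 m (le_trans (le_max_left _ _) hm) n (le_trans (le_max_left _ _) hn)
    have e2 : dist (zs m) (zs n) < c * ε / (2 * (B / c + 1)) := hN2 m (le_trans (le_max_right _ _) hm) n (le_trans (le_max_right _ _) hn)
    rw [dist_eq_norm] at e1 e2 ⊢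
    have hBc : (0:ℝ) ≤ B / c := le_trans (norm_nonneg _) (hφB 0)
    have : ‖((φs m : H)) - ((φs n : H))‖ = ‖((φs m - φs n : D) : H)‖ := by
      simp [Submodule.coe_sub]
    rw [this]
    have h5 : ‖zs m - zs n‖ * (B / c) < c * ε / 2 := by
      have := mul_le_mul_of_nonneg_left (le_of_lt e2) hBc
      calc ‖zs m - zs n‖ * (B / c) ≤ (c * ε / (2 * (B / c + 1))) * (B / c) := by nlinarith [norm_nonneg (zs m - zs n)]
        _ < c * ε / 2 := by
          rw [div_mul_eq_mul_div, div_lt_div_iff₀ (by positivity) (by norm_num)]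
          nlinarith
    nlinarith [hnorm]
  obtain ⟨l, hl⟩ := cauchySeq_tendsto_of_complete hcauchy
  have hA : Tendsto (fun n => A (φs n)) atTop (𝓝 (y + w • l)) := by
    have : (fun n => A (φs n)) = fun n => Y n + zs n • ((φs n : H)) := by
      funext n; simp [hY]
    rw [this]
    exact hy.add (hz.smul hl)
  have hmem : (l, y + w • l) ∈ {p : H × H | ∃ φ : D, p = ((φ : H), A φ)} := by
    refine hclosed.mem_of_tendsto (hl.prodMk_nhds hA) (Filter.Eventually.of_forall fun n => ⟨φs n, rfl⟩)
  obtain ⟨ψ, hψ⟩ := hmem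
  have h1 : (ψ : H) = l := (congrArg Prod.fst hψ).symm
  have h2 : A ψ = y + w • l := (congrArg Prod.snd hψ).symm
  refine ⟨ψ, ?_⟩
  rw [h2, h1]
  abel
open MeasureTheory Complex

end AuxST1

/-- A densely defined, closed, symmetric operator with deficiency indices
(1,1) that is completely nonselfadjoint can exist only in a separable Hilbert space. -/
theorem statement1
    {H : Type*} [NormedAddCommGroup H] [InnerProductSpace ℂ H] [CompleteSpace H]
    (D : Submodule ℂ H) (A : D →ₗ[ℂ] H)
    (hdense : Dense (D : Set H))
    (hclosed : IsClosed {p : H × H | ∃ φ : D, p = ((φ : H), A φ)})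
    (hsymm : ∀ φ ψ : D, (inner ℂ (A φ) (ψ : H) : ℂ) = inner ℂ (φ : H) (A ψ))
    (hdef : ∀ z : ℂ, z.im ≠ 0 →
      Module.finrank ℂ ((LinearMap.range (A - z • D.subtype))ᗮ : Submodule ℂ H) = 1)
    (hcns : (⋂ z ∈ {z : ℂ | z.im ≠ 0},
      ((LinearMap.range (A - z • D.subtype) : Submodule ℂ H) : Set H)) = {0}) :
    TopologicalSpace.SeparableSpace H := by
  classical
  have happ : ∀ (z : ℂ) (φ : D), (A - z • D.subtype) φ = A φ - z • (φ : H) := by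
    intro z φ; simp
  -- ranges are closed
  have hcl : ∀ z : ℂ, z.im ≠ 0 →
      IsClosed ((LinearMap.range (A - z • D.subtype) : Submodule ℂ H) : Set H) := by
    intro z hz
    apply IsSeqClosed.isClosed
    intro xs y hmem hlim
    choose φs hφs using hmem
    have hlim' : Filter.Tendsto (fun n => A (φs n) - z • ((φs n : H))) Filter.atTop (nhds y) := by
      have : (fun n => A (φs n) - z • ((φs n : H))) = xs := by
        funext n; rw [← happ]; exact hφs n
      rw [this]; exact hlim
    obtain ⟨φ, hφ⟩ := graph_lim hclosed hsymm (abs_pos.mpr hz) (fun _ => z) z φs y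
      (fun _ => le_refl _) tendsto_const_nhds hlim'
    exact ⟨φ, by rw [happ]; exact hφ⟩
  -- generators of deficiency spaces
  have hgen : ∀ z : ℂ, ∃ e : H, z.im ≠ 0 →
      e ∈ (LinearMap.range (A - z • D.subtype))ᗮ ∧ e ≠ 0 ∧
      ∀ u ∈ (LinearMap.range (A - z • D.subtype))ᗮ, ∃ c : ℂ, u = c • e := by
    intro z
    by_cases hz : z.im ≠ 0
    · obtain ⟨v, hv0, hv⟩ := finrank_eq_one_iff'.mp (hdef z hz)
      refine ⟨(v : H), fun _ => ⟨v.2, ?_, ?_⟩⟩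
      · simpa using hv0
      · intro u hu
        obtain ⟨c, hc⟩ := hv ⟨u, hu⟩
        exact ⟨c, by simpa using congrArg Subtype.val hc.symm⟩
    · exact ⟨0, fun h => absurd h hz⟩
  choose e he using hgen
  -- countable set of nonreal rational points
  set Q : Set ℂ := {z : ℂ | ∃ q r : ℚ, (q : ℝ) = z.re ∧ (r : ℝ) = z.im ∧ z.im ≠ 0} with hQ
  have hQc : Q.Countable := by
    have : Q ⊆ Set.range (fun p : ℚ × ℚ => (⟨(p.1 : ℝ), (p.2 : ℝ)⟩ : ℂ)) := by
      rintro z ⟨q, r, hq, hr, -⟩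
      exact ⟨(q, r), by simp [Complex.ext_iff, hq, hr]⟩
    exact (Set.countable_range _).mono this
  set S : Set H := e '' Q with hS
  have hSc : S.Countable := hQc.image e
  -- the span of S is dense
  have hdense : (Submodule.span ℂ S).topologicalClosure = ⊤ := by
    rw [Submodule.topologicalClosure_eq_top_iff]
    rw [Submodule.eq_bot_iff]
    intro x hx
    -- x is orthogonal to every deficiency space for z ∈ Q, hence in every range
    have hxran : ∀ z ∈ Q, x ∈ LinearMap.range (A - z • D.subtype) := by
      intro z hzQ
      have hz : z.im ≠ 0 := by obtain ⟨q, r, _, _, h⟩ := hzQ; exact h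
      obtain ⟨hemem, hene, hespan⟩ := he z hz
      have hxe : (inner ℂ (e z) x : ℂ) = 0 := by
        have : e z ∈ Submodule.span ℂ S := Submodule.subset_span ⟨z, hzQ, rfl⟩
        exact hx (e z) this
      have hxorth : x ∈ ((LinearMap.range (A - z • D.subtype))ᗮ)ᗮ := by
        intro u hu
        obtain ⟨c, hc⟩ := hespan u hu
        rw [hc, inner_smul_left, hxe, mul_zero]
      rwa [Submodule.orthogonal_orthogonal_eq_closure,
        IsClosed.submodule_topologicalClosure_eq (hcl z hz)] at hxorth
    -- propagate to all nonreal z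
    have hall : ∀ w : ℂ, w.im ≠ 0 → x ∈ LinearMap.range (A - w • D.subtype) := by
      intro w hw
      -- build a sequence in Q tending to w with imaginary parts bounded below
      have hc2 : (0:ℝ) < |w.im| / 2 := by positivity
      have hseq : ∀ n : ℕ, ∃ z : ℂ, z ∈ Q ∧ |z.im| ≥ |w.im| / 2 ∧
          dist z w ≤ 2 / ((n:ℝ) + 1) := by
        intro n
        have hn : (0:ℝ) < 1 / ((n:ℝ) + 1) := by positivity
        obtain ⟨q, hq⟩ := exists_rat_near w.re hn
        have hmin : (0:ℝ) < min (1 / ((n:ℝ) + 1)) (|w.im| / 2) := lt_min hn hc2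
        obtain ⟨r, hr⟩ := exists_rat_near w.im hmin
        refine ⟨⟨(q : ℝ), (r : ℝ)⟩, ?_, ?_, ?_⟩
        · have hr2 : |w.im - (r:ℝ)| < |w.im| / 2 := lt_of_lt_of_le hr (min_le_right _ _)
          have : (r : ℝ) ≠ 0 := by
            intro h0
            rw [h0, sub_zero] at hr2
            linarith
          exact ⟨q, r, rfl, rfl, this⟩
        · have hr2 : |w.im - (r:ℝ)| < |w.im| / 2 := lt_of_lt_of_le hr (min_le_right _ _)
          have := abs_sub_abs_le_abs_sub w.im (r:ℝ)
          rw [ge_iff_le]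
          have h3 : |w.im| - |(r:ℝ)| ≤ |w.im - (r:ℝ)| := this
          linarith
        · have hq1 : |w.re - (q:ℝ)| < 1 / ((n:ℝ)+1) := hq
          have hr1 : |w.im - (r:ℝ)| < 1 / ((n:ℝ)+1) := lt_of_lt_of_le hr (min_le_left _ _)
          have : dist (⟨(q:ℝ), (r:ℝ)⟩ : ℂ) w ≤ |(q:ℝ) - w.re| + |(r:ℝ) - w.im| := by
            rw [Complex.dist_eq]
            refine le_trans (Complex.norm_le_abs_re_add_abs_im _) ?_
            simp
          rw [abs_sub_comm ((q:ℝ)) w.re, abs_sub_comm ((r:ℝ)) w.im] at this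
          have h22 : (2:ℝ) / ((n:ℝ) + 1) = 1 / ((n:ℝ) + 1) + 1 / ((n:ℝ) + 1) := by ring
          linarith
      choose zs hzsQ hzsim hzsd using hseq
      have hzs : Filter.Tendsto zs Filter.atTop (nhds w) := by
        rw [tendsto_iff_dist_tendsto_zero]
        refine squeeze_zero (fun n => dist_nonneg) hzsd ?_
        have : Filter.Tendsto (fun n : ℕ => 2 * (1 / ((n:ℝ) + 1))) Filter.atTop (nhds (2 * 0)) :=
          (tendsto_one_div_add_atTop_nhds_zero_nat).const_mul 2
        simpa [div_eq_mul_inv] using this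
      have hmem : ∀ n, x ∈ LinearMap.range (A - zs n • D.subtype) := fun n => hxran _ (hzsQ n)
      choose φs hφs using hmem
      have hconst : Filter.Tendsto (fun n => A (φs n) - zs n • ((φs n : H))) Filter.atTop (nhds x) := by
        have : (fun n => A (φs n) - zs n • ((φs n : H))) = fun _ => x := by
          funext n; rw [← happ]; exact hφs n
        rw [this]; exact tendsto_const_nhds
      obtain ⟨φ, hφ⟩ := graph_lim hclosed hsymm hc2 zs w φs x hzsim hzs hconst
      exact ⟨φ, by rw [happ]; exact hφ⟩
    -- conclude x = 0 using complete nonselfadjointness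
    have : x ∈ (⋂ z ∈ {z : ℂ | z.im ≠ 0},
        ((LinearMap.range (A - z • D.subtype) : Submodule ℂ H) : Set H)) := by
      simp only [Set.mem_iInter]
      intro z hz
      exact hall z hz
    rw [hcns] at this
    simpa using this
  -- separability
  have hsep : TopologicalSpace.IsSeparable ((Submodule.span ℂ S : Submodule ℂ H) : Set H) :=
    hSc.isSeparable.span
  have hsep2 : TopologicalSpace.IsSeparable (Set.univ : Set H) := by
    have h1 : closure ((Submodule.span ℂ S : Submodule ℂ H) : Set H) = Set.univ := by
      have := congrArg (fun K : Submodule ℂ H => (K : Set H)) hdense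
      simpa [Submodule.topologicalClosure_coe] using this
    rw [← h1]
    exact hsep.closure
  exact TopologicalSpace.isSeparable_univ_iff.mp hsep2
end

section
/- Let H be a complex Hilbert space and let ξ₁, ξ₂ : ℂ → H be entire (everywhere complex-analytic) H-valued functions such that ξ₁(z) ≠ 0 and ξ₂(z) ≠ 0 for every z ∈ ℂ, and such that for every z ∈ ℂ the vectors ξ₁(z) and ξ₂(z) are linearly dependent (i.e., ξ₁(z) lies in the complex span of ξ₂(z)). Then there exists an entire, nowhere-vanishing function g : ℂ → ℂ such that ξ₁(z) = g(z)·ξ₂(z) for all z ∈ ℂ. If moreover J : H → H is a conjugate-linear map satisfying J² = I and ⟨Jψ, Jφ⟩ = ⟨φ, ψ⟩ for all φ, ψ ∈ H, and Jξᵢ(z) = ξᵢ(conj z) for all z ∈ ℂ and i = 1, 2, then g is real entire, i.e., conj(g(conj z)) = g(z) for all z ∈ ℂ. -/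
open Complex

/-- Two zero-free entire `H`-valued functions that are pointwise linearly
dependent differ by a zero-free entire scalar function `g`; if moreover both commute in
the stated way with an involution `J`, then `g` is real entire. -/
theorem statement2
    {H : Type*} [NormedAddCommGroup H] [InnerProductSpace ℂ H] [CompleteSpace H]
    (ξ₁ ξ₂ : ℂ → H)
    (h₁ : Differentiable ℂ ξ₁) (h₂ : Differentiable ℂ ξ₂)
    (hz₁ : ∀ z : ℂ, ξ₁ z ≠ 0) (hz₂ : ∀ z : ℂ, ξ₂ z ≠ 0)
    (hdep : ∀ z : ℂ, ∃ c : ℂ, ξ₁ z = c • ξ₂ z) :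
    ∃ g : ℂ → ℂ, Differentiable ℂ g ∧ (∀ z : ℂ, g z ≠ 0) ∧
      (∀ z : ℂ, ξ₁ z = g z • ξ₂ z) ∧
      (∀ J : H → H,
        (∀ (a b : ℂ) (x y : H),
          J (a • x + b • y) = (starRingEnd ℂ) a • J x + (starRingEnd ℂ) b • J y) →
        (∀ x : H, J (J x) = x) →
        (∀ φ ψ : H, (inner ℂ (J ψ) (J φ) : ℂ) = inner ℂ φ ψ) →
        (∀ z : ℂ, J (ξ₁ z) = ξ₁ ((starRingEnd ℂ) z)) →
        (∀ z : ℂ, J (ξ₂ z) = ξ₂ ((starRingEnd ℂ) z)) →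
        ∀ z : ℂ, (starRingEnd ℂ) (g ((starRingEnd ℂ) z)) = g z) := by
  set g : ℂ → ℂ := fun z => (inner ℂ (ξ₂ z) (ξ₁ z) : ℂ) / (inner ℂ (ξ₂ z) (ξ₂ z) : ℂ) with hg
  have hrep : ∀ z : ℂ, ξ₁ z = g z • ξ₂ z := by
    intro z
    obtain ⟨c, hc⟩ := hdep z
    have hne : (inner ℂ (ξ₂ z) (ξ₂ z) : ℂ) ≠ 0 := inner_self_ne_zero.mpr (hz₂ z)
    have : g z = c := by
      simp only [hg, hc, inner_smul_right]
      field_simp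
    rw [this, hc]
  have hgz : ∀ z : ℂ, g z ≠ 0 := by
    intro z hzero
    exact hz₁ z (by rw [hrep z, hzero, zero_smul])
  refine ⟨g, ?_, hgz, hrep, ?_⟩
  · intro z₀
    set v := ξ₂ z₀ with hv
    have hf₁ : Differentiable ℂ (fun z => (inner ℂ v (ξ₁ z) : ℂ)) :=
      (innerSL ℂ v).differentiable.comp h₁
    have hf₂ : Differentiable ℂ (fun z => (inner ℂ v (ξ₂ z) : ℂ)) :=
      (innerSL ℂ v).differentiable.comp h₂
    have hne : (inner ℂ v (ξ₂ z₀) : ℂ) ≠ 0 := inner_self_ne_zero.mpr (hz₂ z₀)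
    have hopen : ∀ᶠ z in nhds z₀, (inner ℂ v (ξ₂ z) : ℂ) ≠ 0 :=
      (hf₂.continuous.continuousAt).eventually_ne hne
    have heq : (fun z => (inner ℂ v (ξ₁ z) : ℂ) / (inner ℂ v (ξ₂ z) : ℂ)) =ᶠ[nhds z₀] g := by
      filter_upwards [hopen] with z hz
      have := hrep z
      rw [this, inner_smul_right]
      field_simp
    exact (((hf₁ z₀).div (hf₂ z₀) hne).congr_of_eventuallyEq heq.symm)
  · intro J hlin hinv hip hJ₁ hJ₂ z
    have hsmul : ∀ (c : ℂ) (x : H), J (c • x) = (starRingEnd ℂ) c • J x := by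
      intro c x
      have := hlin c 0 x x
      simpa using this
    have key : ξ₁ ((starRingEnd ℂ) z) = (starRingEnd ℂ) (g z) • ξ₂ ((starRingEnd ℂ) z) := by
      rw [← hJ₁ z, hrep z, hsmul, hJ₂]
    have : g ((starRingEnd ℂ) z) • ξ₂ ((starRingEnd ℂ) z)
        = (starRingEnd ℂ) (g z) • ξ₂ ((starRingEnd ℂ) z) := by
      rw [← hrep, key]
    have heq : g ((starRingEnd ℂ) z) = (starRingEnd ℂ) (g z) := by
      have hsub : (g ((starRingEnd ℂ) z) - (starRingEnd ℂ) (g z)) • ξ₂ ((starRingEnd ℂ) z) = 0 := by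
        rw [sub_smul, this, sub_self]
      rcases smul_eq_zero.mp hsub with h | h
      · exact sub_eq_zero.mp h
      · exact absurd h (hz₂ _)
    rw [heq, Complex.conj_conj]
end

section
/- Let e be a Hermite–Biehler function, let f belong to the de Branges space B(e), and let w ∈ ℂ with Im w ≠ 0 be such that f(w) = 0. Then the entire function g(z) := f(z)·(z − conj w)/(z − w) also belongs to B(e) and has the same norm as f, i.e., ∫_ℝ |g(x)|² |e(x)|⁻² dx = ∫_ℝ |f(x)|² |e(x)|⁻² dx. -/
open MeasureTheory Complex

noncomputable section

/-- `f#(z) := conj (f (conj z))`. -/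
def fsharp (f : ℂ → ℂ) : ℂ → ℂ := fun z => (starRingEnd ℂ) (f ((starRingEnd ℂ) z))

/-- Hermite–Biehler function: entire with `|e(conj z)| < |e z|` on the upper half-plane. -/
def IsHB (e : ℂ → ℂ) : Prop :=
  Differentiable ℂ e ∧
  ∀ z : ℂ, 0 < z.im → ‖e ((starRingEnd ℂ) z)‖ < ‖e z‖

/-- Membership in the de Branges space `B(e)`. -/
def MemDB (e f : ℂ → ℂ) : Prop :=
  Differentiable ℂ f ∧
  Integrable (fun x : ℝ => ‖f x / e x‖ ^ 2) ∧
  ∃ c : ℝ, 0 ≤ c ∧ ∀ z : ℂ, 0 < z.im →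
    ‖f z / e z‖ ≤ c / Real.sqrt z.im ∧
    ‖fsharp f z / e z‖ ≤ c / Real.sqrt z.im

/-- Squared norm in `B(e)`: `∫ |f(x)|² |e(x)|⁻² dx`. -/
def dBnormSq (e f : ℂ → ℂ) : ℝ :=
  ∫ x : ℝ, ‖f x‖ ^ 2 / ‖e x‖ ^ 2

/-- Inner product in `B(e)`: `∫ conj (f x) * g x * |e x|⁻² dx`. -/
def dBinner (e f g : ℂ → ℂ) : ℂ :=
  ∫ x : ℝ, (starRingEnd ℂ) (f x) * g x / ((‖e x‖ : ℂ)) ^ 2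

/-- The reproducing kernel of `B(e)`. -/
def dBkernel (e : ℂ → ℂ) (z w : ℂ) : ℂ :=
  if z = (starRingEnd ℂ) w then
    (deriv (fsharp e) z * e z - deriv e z * fsharp e z) / (2 * Real.pi * Complex.I)
  else
    (fsharp e z * e ((starRingEnd ℂ) w) - e z * fsharp e ((starRingEnd ℂ) w)) /
      (2 * Real.pi * Complex.I * (z - (starRingEnd ℂ) w))

/-- `s_β(z) := (i/2) (e^{iβ} e(z) − e^{−iβ} e#(z))`. -/
def sfun (e : ℂ → ℂ) (β : ℝ) (z : ℂ) : ℂ :=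
  Complex.I / 2 *
    (Complex.exp (Complex.I * β) * e z - Complex.exp (-(Complex.I * β)) * fsharp e z)

end

section Aux

lemma fsharp_hasDerivAt {f : ℂ → ℂ} {d z : ℂ} (h : HasDerivAt f d ((starRingEnd ℂ) z)) :
    HasDerivAt (fsharp f) ((starRingEnd ℂ) d) z := by
  rw [hasDerivAt_iff_tendsto_slope] at h ⊢
  have hconj : Filter.Tendsto (starRingEnd ℂ) (nhdsWithin z {z}ᶜ)
      (nhdsWithin ((starRingEnd ℂ) z) {(starRingEnd ℂ) z}ᶜ) := by
    apply Filter.Tendsto.inf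
    · exact (Complex.continuous_conj.tendsto z)
    · apply Filter.tendsto_principal_principal.mpr
      intro x hx hx'
      exact hx (by simpa using congrArg (starRingEnd ℂ) hx')
  have := (Complex.continuous_conj.tendsto d).comp (h.comp hconj)
  refine this.congr (fun y => ?_)
  simp only [Function.comp, slope, fsharp, vsub_eq_sub, smul_eq_mul]
  rw [map_mul]; simp

lemma fsharp_differentiable {f : ℂ → ℂ} (hf : Differentiable ℂ f) :
    Differentiable ℂ (fsharp f) := fun z =>
  (fsharp_hasDerivAt (hf ((starRingEnd ℂ) z)).hasDerivAt).differentiableAt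

lemma deriv_fsharp {f : ℂ → ℂ} (hf : Differentiable ℂ f) (z : ℂ) :
    deriv (fsharp f) z = (starRingEnd ℂ) (deriv f ((starRingEnd ℂ) z)) :=
  (fsharp_hasDerivAt (hf ((starRingEnd ℂ) z)).hasDerivAt).deriv

lemma dslope_differentiable {f : ℂ → ℂ} (hf : Differentiable ℂ f) (a : ℂ) :
    Differentiable ℂ (dslope f a) := by
  intro z
  rcases eq_or_ne z a with rfl | h
  · obtain ⟨p, hp⟩ := hf.analyticAt z
    exact (hp.has_fpower_series_dslope_fslope).analyticAt.differentiableAt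
  · exact (differentiableAt_dslope_of_ne h).mpr (hf.differentiableAt)

lemma abs_sub_conj_sq (z w : ℂ) :
    ‖z - (starRingEnd ℂ) w‖ ^ 2 = ‖z - w‖ ^ 2 + 4 * w.im * z.im := by
  rw [Complex.sq_norm, Complex.sq_norm, Complex.normSq_apply, Complex.normSq_apply]
  simp [Complex.sub_re, Complex.sub_im]
  ring

lemma hb_ne_zero {e : ℂ → ℂ} (he : IsHB e) {z : ℂ} (hz : 0 < z.im) : e z ≠ 0 := by
  intro h
  have := he.2 z hz
  rw [h] at this
  simp at this
  exact (norm_nonneg _).not_gt this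

lemma ratio_le_one {v z : ℂ} (hv : v.im < 0) (hz : 0 < z.im) :
    ‖z - (starRingEnd ℂ) v‖ ≤ ‖z - v‖ := by
  have h := abs_sub_conj_sq z v
  have h4 : 4 * v.im * z.im < 0 := by
    have := mul_pos (by linarith : (0:ℝ) < 4 * -v.im) hz
    nlinarith
  have hsq : ‖z - (starRingEnd ℂ) v‖ ^ 2 ≤ ‖z - v‖ ^ 2 := by
    nlinarith
  nlinarith [norm_nonneg (z - (starRingEnd ℂ) v), norm_nonneg (z - v)]

lemma good_bound {e φ : ℂ → ℂ} {c : ℝ} {v : ℂ} (hv : v.im < 0)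
    (hc : ∀ z : ℂ, 0 < z.im → ‖φ z / e z‖ ≤ c / Real.sqrt z.im)
    {z : ℂ} (hz : 0 < z.im) :
    ‖φ z * (z - (starRingEnd ℂ) v) / (z - v) / e z‖ ≤ c / Real.sqrt z.im := by
  have hzv : z - v ≠ 0 := by
    intro h
    have : z = v := by linear_combination h
    rw [this] at hz; linarith
  have heq : φ z * (z - (starRingEnd ℂ) v) / (z - v) / e z
      = (φ z / e z) * ((z - (starRingEnd ℂ) v) / (z - v)) := by ring
  rw [heq, norm_mul]
  have h1 : ‖(z - (starRingEnd ℂ) v) / (z - v)‖ ≤ 1 := by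
    rw [norm_div, div_le_one (norm_pos_iff.mpr hzv)]
    exact ratio_le_one hv hz
  calc ‖φ z / e z‖ * ‖(z - (starRingEnd ℂ) v) / (z - v)‖
      ≤ ‖φ z / e z‖ * 1 :=
        mul_le_mul_of_nonneg_left h1 (norm_nonneg _)
    _ = ‖φ z / e z‖ := mul_one _
    _ ≤ c / Real.sqrt z.im := hc z hz

lemma abs_sub_conj_self {v : ℂ} (hv : 0 < v.im) :
    ‖v - (starRingEnd ℂ) v‖ = 2 * v.im := by
  have h : v - (starRingEnd ℂ) v = Complex.I * ((2 * v.im : ℝ) : ℂ) := by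
    apply Complex.ext <;> simp <;> ring
  rw [h, norm_mul, Complex.norm_I, Complex.norm_real, Real.norm_eq_abs, one_mul, abs_of_pos (by linarith)]

lemma bad_bound {e φ : ℂ → ℂ} {c : ℝ} (he : IsHB e) (hφ : Differentiable ℂ φ)
    {v : ℂ} (hv : 0 < v.im) (hφv : φ v = 0) (hc0 : 0 ≤ c)
    (hc : ∀ z : ℂ, 0 < z.im → ‖φ z / e z‖ ≤ c / Real.sqrt z.im) :
    ∃ c' : ℝ, 0 ≤ c' ∧ ∀ z : ℂ, 0 < z.im →
      ‖dslope φ v z * (z - (starRingEnd ℂ) v) / e z‖ ≤ c' / Real.sqrt z.im := by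
  set ψ : ℂ → ℂ := fun z => dslope φ v z * (z - (starRingEnd ℂ) v) / e z with hψ
  have hcont : ContinuousOn ψ (Metric.closedBall v (v.im / 2)) := by
    apply ContinuousOn.div
    · exact (((dslope_differentiable hφ v).continuous.mul
        (continuous_id.sub continuous_const))).continuousOn
    · exact he.1.continuous.continuousOn
    · intro x hx
      apply hb_ne_zero he
      have h1 : |x.im - v.im| ≤ ‖x - v‖ := by
        simpa [Complex.sub_im] using Complex.abs_im_le_norm (x - v)
      have h2 : ‖x - v‖ ≤ v.im / 2 := by
        simpa [Complex.dist_eq] using Metric.mem_closedBall.mp hx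
      have := abs_sub_abs_le_abs_sub x.im v.im
      rw [abs_sub_comm] at h1
      have := abs_le.mp (h1.trans h2)
      linarith [this.1]
  obtain ⟨K, hK⟩ := (isCompact_closedBall v (v.im / 2)).exists_bound_of_continuousOn hcont
  set c' : ℝ := max (5 * c) (max K 0 * Real.sqrt (3 * v.im / 2)) with hc'
  have hc'0 : 0 ≤ c' := le_trans (by positivity) (le_max_left _ _)
  refine ⟨c', hc'0, fun z hz => ?_⟩
  have hsz : 0 < Real.sqrt z.im := Real.sqrt_pos.mpr hz
  by_cases hD : ‖z - v‖ ≤ v.im / 2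
  · -- near v: use compact bound
    have hzD : z ∈ Metric.closedBall v (v.im / 2) := by
      simpa [Complex.dist_eq] using hD
    have hKz : ‖ψ z‖ ≤ max K 0 := by
      have := hK z hzD
      exact this.trans (le_max_left _ _)
    have him : z.im ≤ 3 * v.im / 2 := by
      have h1 : |z.im - v.im| ≤ ‖z - v‖ := by
        simpa [Complex.sub_im] using Complex.abs_im_le_norm (z - v)
      have := abs_le.mp (h1.trans hD)
      linarith [this.2]
    rw [le_div_iff₀ hsz]
    calc ‖ψ z‖ * Real.sqrt z.im
        ≤ max K 0 * Real.sqrt (3 * v.im / 2) := by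
          apply mul_le_mul hKz (Real.sqrt_le_sqrt him) (Real.sqrt_nonneg _) (le_max_right _ _)
      _ ≤ c' := le_max_right _ _
  · -- far from v
    push_neg at hD
    have hzv : z ≠ v := by
      intro h; rw [h] at hD; simp at hD; linarith
    have hzv' : z - v ≠ 0 := sub_ne_zero.mpr hzv
    have heq : ψ z = (φ z / e z) * ((z - (starRingEnd ℂ) v) / (z - v)) := by
      rw [hψ]
      simp only [dslope_of_ne _ hzv, slope, hφv, vsub_eq_sub, sub_zero, smul_eq_mul]
      field_simp
    have hratio : ‖(z - (starRingEnd ℂ) v) / (z - v)‖ ≤ 5 := by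
      rw [norm_div, div_le_iff₀ (norm_pos_iff.mpr hzv')]
      have htri : ‖z - (starRingEnd ℂ) v‖
          ≤ ‖z - v‖ + ‖v - (starRingEnd ℂ) v‖ := by
        calc ‖z - (starRingEnd ℂ) v‖
            = ‖(z - v) + (v - (starRingEnd ℂ) v)‖ := by ring_nf
          _ ≤ _ := norm_add_le _ _
      rw [abs_sub_conj_self hv] at htri
      linarith
    show ‖ψ z‖ ≤ c' / Real.sqrt z.im
    rw [heq, norm_mul]
    calc ‖φ z / e z‖ * ‖(z - (starRingEnd ℂ) v) / (z - v)‖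
        ≤ (c / Real.sqrt z.im) * 5 :=
          mul_le_mul (hc z hz) hratio (norm_nonneg _) (by positivity)
      _ = 5 * c / Real.sqrt z.im := by ring
      _ ≤ c' / Real.sqrt z.im := by
          gcongr
          exact le_max_left _ _

lemma conj_ne {z w : ℂ} (h : z.im ≠ -w.im) : (starRingEnd ℂ) z ≠ w := by
  intro hh
  apply h
  have := congrArg Complex.im hh
  simp [Complex.conj_im] at this
  linarith


end Aux

/-- If `f ∈ B(e)` vanishes at a nonreal point `w`, then the entire
function `g(z) = f(z)(z − conj w)/(z − w)` belongs to `B(e)` and has the same norm. -/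
theorem statement4 (e f : ℂ → ℂ) (he : IsHB e) (hf : MemDB e f)
    (w : ℂ) (hw : w.im ≠ 0) (hfw : f w = 0) :
    ∃ g : ℂ → ℂ, Differentiable ℂ g ∧
      (∀ z : ℂ, z ≠ w → g z = f z * (z - (starRingEnd ℂ) w) / (z - w)) ∧
      MemDB e g ∧ dBnormSq e g = dBnormSq e f := by
  obtain ⟨hfd, hfi, c, hc0, hc⟩ := hf
  set wc : ℂ := (starRingEnd ℂ) w with hwc
  set g : ℂ → ℂ := fun z => dslope f w z * (z - wc) with hg
  have hgd : Differentiable ℂ g :=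
    (dslope_differentiable hfd w).mul (differentiable_id.sub (differentiable_const _))
  -- formula away from w
  have hgz : ∀ z : ℂ, z ≠ w → g z = f z * (z - wc) / (z - w) := by
    intro z hz
    have hz' : z - w ≠ 0 := sub_ne_zero.mpr hz
    simp only [hg, dslope_of_ne _ hz, slope, hfw, vsub_eq_sub, sub_zero, smul_eq_mul]
    field_simp
  -- |g x| = |f x| on ℝ
  have habs : ∀ x : ℝ, ‖g x‖ = ‖f x‖ := by
    intro x
    have hxw : (x : ℂ) ≠ w := by
      intro h
      apply hw
      rw [← h, Complex.ofReal_im]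
    rw [hgz x hxw]
    have hconj : ((x : ℂ) - wc) = (starRingEnd ℂ) ((x : ℂ) - w) := by
      rw [map_sub, Complex.conj_ofReal]
    rw [norm_div, norm_mul, hconj, Complex.norm_conj]
    rw [mul_div_assoc, div_self (norm_ne_zero_iff.mpr (sub_ne_zero.mpr hxw)), mul_one]
  -- fsharp g formula away from wc
  have hgsz : ∀ z : ℂ, z ≠ wc → fsharp g z = fsharp f z * (z - w) / (z - wc) := by
    intro z hz
    have hz1 : (starRingEnd ℂ) z ≠ w := by
      intro h
      apply hz
      rw [hwc, ← h, Complex.conj_conj]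
    have hz2 : z - wc ≠ 0 := sub_ne_zero.mpr hz
    simp only [fsharp, hg, dslope_of_ne _ hz1, slope, hfw, vsub_eq_sub, sub_zero, smul_eq_mul]
    rw [map_mul, map_mul, map_inv₀, map_sub, map_sub, Complex.conj_conj, Complex.conj_conj,
      ← hwc]
    field_simp
  refine ⟨g, hgd, hgz, ⟨hgd, ?_, ?_⟩, ?_⟩
  · -- integrable
    apply hfi.congr
    apply Filter.Eventually.of_forall
    intro x
    simp only [norm_div, habs]
  · -- bounds
    rcases lt_or_gt_of_ne hw with hneg | hpos
    · -- w in lower half plane: g is the "good" side, fsharp g the "bad" side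
      have hwc_pos : 0 < wc.im := by simp [hwc, Complex.conj_im]; linarith
      have hfs0 : fsharp f wc = 0 := by
        simp [fsharp, hwc, Complex.conj_conj, hfw]
      obtain ⟨c2, hc20, hc2⟩ := bad_bound he (fsharp_differentiable hfd) hwc_pos hfs0 hc0
        (fun z hz => (hc z hz).2)
      -- fsharp g equals the dslope expression everywhere
      have hgs_all : ∀ z : ℂ, fsharp g z = dslope (fsharp f) wc z * (z - (starRingEnd ℂ) wc) := by
        intro z
        rcases eq_or_ne z wc with rfl | hzwc
        · rw [dslope_same]
          have h1 : fsharp g wc = (starRingEnd ℂ) (deriv f w) * (wc - w) := by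
            have : (starRingEnd ℂ) wc = w := by rw [hwc, Complex.conj_conj]
            simp only [fsharp, this, hg, dslope_same]
            rw [map_mul, map_sub, Complex.conj_conj, ← hwc, ← this]
          rw [h1, deriv_fsharp hfd]
          have : (starRingEnd ℂ) wc = w := by rw [hwc, Complex.conj_conj]
          rw [this]
        · rw [hgsz z hzwc, dslope_of_ne _ hzwc, slope, hfs0]
          have : (starRingEnd ℂ) wc = w := by rw [hwc, Complex.conj_conj]
          rw [this]
          have hz2 : z - wc ≠ 0 := sub_ne_zero.mpr hzwc
          simp only [vsub_eq_sub, sub_zero, smul_eq_mul]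
          field_simp
      refine ⟨max c c2, le_max_of_le_left hc0, fun z hz => ⟨?_, ?_⟩⟩
      · -- g bound: good case, pole at w in LHP
        have hzw : z ≠ w := by intro h; rw [h] at hz; linarith
        have heq : g z / e z = f z * (z - wc) / (z - w) / e z := by rw [hgz z hzw]
        rw [heq]
        calc ‖f z * (z - wc) / (z - w) / e z‖ ≤ c / Real.sqrt z.im :=
              good_bound hneg (fun z hz => (hc z hz).1) hz
          _ ≤ max c c2 / Real.sqrt z.im := by gcongr; exact le_max_left _ _
      · -- fsharp g bound: bad case
        have heq : fsharp g z / e z = dslope (fsharp f) wc z * (z - (starRingEnd ℂ) wc) / e z := by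
          rw [hgs_all z]
        rw [heq]
        calc ‖dslope (fsharp f) wc z * (z - (starRingEnd ℂ) wc) / e z‖
            ≤ c2 / Real.sqrt z.im := hc2 z hz
          _ ≤ max c c2 / Real.sqrt z.im := by gcongr; exact le_max_right _ _
    · -- w in upper half plane: g is the "bad" side, fsharp g the "good" side
      obtain ⟨c2, hc20, hc2⟩ := bad_bound he hfd hpos hfw hc0 (fun z hz => (hc z hz).1)
      have hwc_neg : wc.im < 0 := by simp [hwc, Complex.conj_im]; linarith
      refine ⟨max c c2, le_max_of_le_left hc0, fun z hz => ⟨?_, ?_⟩⟩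
      · calc ‖g z / e z‖ = ‖dslope f w z * (z - wc) / e z‖ := rfl
          _ ≤ c2 / Real.sqrt z.im := hc2 z hz
          _ ≤ max c c2 / Real.sqrt z.im := by gcongr; exact le_max_right _ _
      · have hzwc : z ≠ wc := by
          intro h; rw [h] at hz; linarith
        have heq : fsharp g z / e z = fsharp f z * (z - (starRingEnd ℂ) wc) / (z - wc) / e z := by
          rw [hgsz z hzwc, hwc, Complex.conj_conj]
        rw [heq]
        calc ‖fsharp f z * (z - (starRingEnd ℂ) wc) / (z - wc) / e z‖
            ≤ c / Real.sqrt z.im := good_bound hwc_neg (fun z hz => (hc z hz).2) hz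
          _ ≤ max c c2 / Real.sqrt z.im := by gcongr; exact le_max_left _ _
  · -- norms equal
    unfold dBnormSq
    congr 1
    funext x
    rw [habs x]
end

section
/- Let e be a Hermite–Biehler function having no real zeros, and assume the de Branges space B(e) contains a nonzero element. Then for every β ∈ [0, π), all zeros of the entire function s_β are real and simple; that is, if s_β(w) = 0 for some w ∈ ℂ, then w ∈ ℝ and s_β'(w) ≠ 0. -/
open MeasureTheory Complex

open Filter Topology

lemma hasDerivAt_fsharp' (e : ℂ → ℂ) (he : Differentiable ℂ e) (z : ℂ) :
    HasDerivAt (fsharp e) ((starRingEnd ℂ) (deriv e ((starRingEnd ℂ) z))) z := by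
  set c := (starRingEnd ℂ) z with hc
  have h1 : HasDerivAt e (deriv e c) c := (he c).hasDerivAt
  rw [hasDerivAt_iff_tendsto_slope] at h1 ⊢
  have hmap : Tendsto (fun x : ℂ => (starRingEnd ℂ) x) (𝓝[≠] z) (𝓝[≠] c) := by
    apply tendsto_nhdsWithin_of_tendsto_nhds_of_eventually_within
    · exact (Complex.continuous_conj.tendsto z).mono_left nhdsWithin_le_nhds
    · filter_upwards [self_mem_nhdsWithin] with x hx
      simp only [Set.mem_compl_iff, Set.mem_singleton_iff] at hx ⊢
      exact fun h => hx ((starRingEnd ℂ).injective (h.trans hc.symm))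
  have h2 := (Complex.continuous_conj.tendsto _).comp (h1.comp hmap)
  have heq : ∀ x : ℂ, slope (fsharp e) z x
      = (starRingEnd ℂ) (slope e c ((starRingEnd ℂ) x)) := by
    intro x
    simp only [slope_def_field, fsharp, hc, map_div₀, map_sub, Complex.conj_conj]
  exact h2.congr (fun x => (heq x).symm)

lemma exists_phi' (c : ℂ) (hc : c ≠ 0) :
    ∃ φ : ℝ, 0 < φ ∧ φ < 2 * Real.pi ∧ 0 < (c * Complex.exp (φ * Complex.I)).re := by
  set ψ := c.arg with hψdef
  have h1 : -Real.pi < ψ := Complex.neg_pi_lt_arg c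
  have h2 : ψ ≤ Real.pi := Complex.arg_le_pi c
  have habs : 0 < ‖c‖ := norm_pos_iff.mpr hc
  have key : ∀ φ : ℝ, (c * Complex.exp (φ * Complex.I)).re
      = ‖c‖ * Real.cos (ψ + φ) := by
    intro φ
    conv_lhs => rw [← Complex.norm_mul_exp_arg_mul_I c]
    rw [mul_assoc, ← Complex.exp_add]
    have : ((ψ : ℂ) * Complex.I + (φ : ℂ) * Complex.I) = ((ψ + φ : ℝ) : ℂ) * Complex.I := by
      push_cast; ring
    rw [← hψdef, this, Complex.re_ofReal_mul, Complex.exp_ofReal_mul_I_re]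
  have hπ := Real.pi_pos
  by_cases hψ : 0 < ψ
  · refine ⟨2 * Real.pi - ψ, by linarith, by linarith, ?_⟩
    rw [key]
    have h3 : ψ + (2 * Real.pi - ψ) = 2 * Real.pi := by ring
    rw [h3, Real.cos_two_pi]
    linarith
  · push_neg at hψ
    refine ⟨Real.pi / 4 - ψ, by linarith, by linarith, ?_⟩
    rw [key]
    have h3 : ψ + (Real.pi / 4 - ψ) = Real.pi / 4 := by ring
    rw [h3, Real.cos_pi_div_four]
    have h4 : (0:ℝ) < Real.sqrt 2 / 2 := by positivity
    exact mul_pos habs h4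

/-- If the HB function `e` has no real zeros and `B(e)` contains a nonzero
element, then all zeros of `s_β` are real and simple. -/
theorem statement7 (e : ℂ → ℂ) (he : IsHB e) (hreal : ∀ x : ℝ, e x ≠ 0)
    (hne : ∃ f : ℂ → ℂ, MemDB e f ∧ f ≠ 0)
    (β : ℝ) (hβ : β ∈ Set.Ico 0 Real.pi)
    (w : ℂ) (hw : sfun e β w = 0) :
    w.im = 0 ∧ deriv (sfun e β) w ≠ 0 := by
  obtain ⟨hde, hHB⟩ := he
  set c1 := Complex.exp (Complex.I * β) with hc1def
  set c2 := Complex.exp (-(Complex.I * β)) with hc2def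
  have hc1 : ‖c1‖ = 1 := by rw [hc1def, Complex.norm_exp]; simp
  have hc2 : ‖c2‖ = 1 := by rw [hc2def, Complex.norm_exp]; simp
  have hc2' : c2 ≠ 0 := Complex.exp_ne_zero _
  have hI : (Complex.I / 2 : ℂ) ≠ 0 := by simp [Complex.I_ne_zero]
  have heq : c1 * e w = c2 * fsharp e w := by
    have h0 : Complex.I / 2 * (c1 * e w - c2 * fsharp e w) = 0 := hw
    rcases mul_eq_zero.mp h0 with h | h
    · exact absurd h hI
    · exact sub_eq_zero.mp h
  have habs : ‖e w‖ = ‖fsharp e w‖ := by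
    have := congrArg (‖·‖) heq
    simpa [norm_mul, hc1, hc2] using this
  -- Step 1 : w is real
  have him : w.im = 0 := by
    by_contra h
    rcases lt_or_gt_of_ne h with hneg | hpos
    · have h2 := hHB ((starRingEnd ℂ) w) (by simpa using neg_pos.2 hneg)
      rw [Complex.conj_conj] at h2
      have h3 : ‖fsharp e w‖ = ‖e ((starRingEnd ℂ) w)‖ :=
        Complex.norm_conj _
      rw [habs, h3] at h2
      exact lt_irrefl _ h2
    · have h2 := hHB w hpos
      have h3 : ‖fsharp e w‖ = ‖e ((starRingEnd ℂ) w)‖ :=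
        Complex.norm_conj _
      rw [← h3, ← habs] at h2
      exact lt_irrefl _ h2
  refine ⟨him, ?_⟩
  intro hder0
  -- setup
  have hconj : (starRingEnd ℂ) w = w := Complex.conj_eq_iff_im.2 him
  have hwre : ((w.re : ℝ) : ℂ) = w := Complex.ext rfl (by simp [him])
  have hE : e w ≠ 0 := by rw [← hwre]; exact hreal w.re
  have hF : fsharp e w = (starRingEnd ℂ) (e w) := by rw [fsharp, hconj]
  -- derivative of sfun
  have hfd : HasDerivAt (fsharp e) ((starRingEnd ℂ) (deriv e w)) w := by
    have := hasDerivAt_fsharp' e hde w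
    rwa [hconj] at this
  have hs : HasDerivAt (sfun e β)
      (Complex.I / 2 * (c1 * deriv e w - c2 * (starRingEnd ℂ) (deriv e w))) w := by
    have h1 := (((hde w).hasDerivAt.const_mul c1).sub (hfd.const_mul c2)).const_mul
      (Complex.I / 2)
    exact h1
  have heq' : c1 * deriv e w = c2 * (starRingEnd ℂ) (deriv e w) := by
    have h0 := hs.deriv
    rw [hder0] at h0
    rcases mul_eq_zero.mp h0.symm with h | h
    · exact absurd h hI
    · exact sub_eq_zero.mp h
  -- Theta
  set Θ : ℂ → ℂ := fun z => fsharp e z / e z with hΘdef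
  have hfdiff : Differentiable ℂ (fsharp e) := fun z =>
    (hasDerivAt_fsharp' e hde z).differentiableAt
  have hΘlt : ∀ z : ℂ, 0 < z.im → ‖Θ z‖ < 1 := by
    intro z hz
    have h2 := hHB z hz
    have hz0 : e z ≠ 0 := by
      intro h0
      rw [h0] at h2
      simp only [norm_zero] at h2
      exact (norm_nonneg _).not_gt h2
    rw [hΘdef]
    simp only [norm_div]
    rw [div_lt_one (norm_pos_iff.mpr hz0)]
    calc ‖fsharp e z‖ = ‖e ((starRingEnd ℂ) z)‖ :=
          Complex.norm_conj _
      _ < ‖e z‖ := h2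
  have habsΘw : ‖Θ w‖ = 1 := by
    rw [hΘdef]
    simp only [norm_div, hF]
    rw [Complex.norm_conj, div_self (norm_ne_zero_iff.mpr hE)]
  -- Theta' w = 0
  have hΘ'w : deriv Θ w = 0 := by
    have hd : HasDerivAt Θ
        (((starRingEnd ℂ) (deriv e w) * e w - fsharp e w * deriv e w) / e w ^ 2) w :=
      hfd.div (hde w).hasDerivAt hE
    rw [hd.deriv]
    have e1 : c2 * (starRingEnd ℂ) (e w) = c1 * e w := by rw [← hF]; exact heq.symm
    have e2 : c2 * (starRingEnd ℂ) (deriv e w) = c1 * deriv e w := heq'.symm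
    have h3 : c2 * ((starRingEnd ℂ) (deriv e w) * e w - (starRingEnd ℂ) (e w) * deriv e w)
        = 0 := by linear_combination (e w) * e2 - (deriv e w) * e1
    have hnum : (starRingEnd ℂ) (deriv e w) * e w - fsharp e w * deriv e w = 0 := by
      rw [hF]
      rcases mul_eq_zero.mp h3 with h | h
      · exact absurd h hc2'
      · exact h
    rw [hnum, zero_div]
  -- local factorization
  have hΘa : AnalyticAt ℂ Θ w := (hfdiff.analyticAt w).div (hde.analyticAt w) hE
  set f : ℂ → ℂ := fun z => Θ z - Θ w with hfdef
  have hfa : AnalyticAt ℂ f w := hΘa.sub analyticAt_const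
  have hnotev : ¬ ∀ᶠ z in 𝓝 w, f z = 0 := by
    intro hev
    obtain ⟨δ, hδ, hball⟩ := Metric.eventually_nhds_iff.mp hev
    set z := w + (δ / 2 : ℝ) * Complex.I with hzdef
    have hd2 : dist z w < δ := by
      rw [hzdef, dist_eq]
      simp only [add_sub_cancel_left]
      rw [norm_mul, Complex.norm_I, Complex.norm_real, Real.norm_eq_abs]
      rw [abs_of_pos (by linarith)]
      linarith
    have h0 := hball hd2
    have hzim : 0 < z.im := by
      rw [hzdef]
      simp [him]
      linarith
    have h1 := hΘlt z hzim
    rw [hfdef] at h0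
    simp only [sub_eq_zero] at h0
    rw [h0, habsΘw] at h1
    exact lt_irrefl _ h1
  obtain ⟨n, g, hga, hgne, hfg⟩ := hfa.exists_eventuallyEq_pow_smul_nonzero_iff.mpr hnotev
  -- n ≥ 2
  have hderivf : deriv f w = 0 := by
    rw [hfdef]
    rw [deriv_sub_const]
    exact hΘ'w
  have hn2 : 2 ≤ n := by
    by_contra hlt
    push_neg at hlt
    interval_cases n
    · have h0 := hfg.self_of_nhds
      simp only [sub_self, pow_zero, one_smul] at h0
      rw [hfdef] at h0
      simp only [sub_self] at h0
      exact hgne h0.symm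
    · have h1 : deriv f w = deriv (fun z => (z - w) ^ 1 • g z) w :=
        Filter.EventuallyEq.deriv_eq hfg
      have h2 : HasDerivAt (fun z : ℂ => (z - w) ^ 1 • g z)
          (1 * g w + (w - w) * deriv g w) w := by
        simp only [pow_one, smul_eq_mul]
        exact ((hasDerivAt_id w).sub_const w).mul hga.differentiableAt.hasDerivAt
      rw [h2.deriv] at h1
      simp only [one_mul, sub_self, zero_mul, add_zero] at h1
      rw [hderivf] at h1
      exact hgne h1.symm
  have hn0 : 0 < n := by omega
  -- choose direction
  have hΘw0 : Θ w ≠ 0 := by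
    intro h0
    rw [h0] at habsΘw
    simp at habsΘw
  have hc : (starRingEnd ℂ) (Θ w) * g w ≠ 0 :=
    mul_ne_zero (by simpa using hΘw0) hgne
  obtain ⟨φ, hφ0, hφ2π, hφre⟩ := exists_phi' _ hc
  set θ := φ / n with hθdef
  have hθ0 : 0 < θ := div_pos hφ0 (by exact_mod_cast hn0)
  have hθπ : θ < Real.pi := by
    rw [hθdef]
    have hn2' : (2:ℝ) ≤ n := by exact_mod_cast hn2
    have : φ / n ≤ φ / 2 := by
      apply div_le_div_of_nonneg_left (le_of_lt hφ0) (by norm_num) hn2'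
    have h2 : φ / 2 < Real.pi := by linarith
    linarith
  have hnθ : (n : ℝ) * θ = φ := by
    rw [hθdef]
    field_simp
  have hsinθ : 0 < Real.sin θ := Real.sin_pos_of_pos_of_lt_pi hθ0 hθπ
  -- u := exp(θ I)
  set u := Complex.exp ((θ : ℂ) * Complex.I) with hudef
  have hun : u ^ n = Complex.exp ((φ : ℂ) * Complex.I) := by
    rw [hudef, ← Complex.exp_nat_mul]
    congr 1
    rw [← hnθ]
    push_cast
    ring
  set m : ℝ → ℂ := fun t => w + (t : ℂ) * u with hmdef
  have hmcont : Continuous m := by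
    apply Continuous.add continuous_const
    exact (Complex.continuous_ofReal.mul continuous_const)
  have hm0 : m 0 = w := by simp [hmdef]
  have hmt : Tendsto m (𝓝 0) (𝓝 w) := by
    have := hmcont.tendsto 0
    rwa [hm0] at this
  set h : ℝ → ℝ := fun t =>
    ((starRingEnd ℂ) (Θ w) * Complex.exp ((φ : ℂ) * Complex.I) * g (m t)).re with hhdef
  have hh0 : 0 < h 0 := by
    rw [hhdef]
    simp only [hm0]
    have : (starRingEnd ℂ) (Θ w) * Complex.exp ((φ:ℂ) * Complex.I) * g w
        = ((starRingEnd ℂ) (Θ w) * g w) * Complex.exp ((φ:ℂ) * Complex.I) := by ring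
    rw [this]
    exact hφre
  have hhcont : ContinuousAt h 0 := by
    apply Complex.continuous_re.continuousAt.comp
    apply ContinuousAt.mul continuousAt_const
    have hg : ContinuousAt g w := hga.continuousAt
    have : ContinuousAt g (m 0) := by rwa [hm0]
    exact this.comp hmcont.continuousAt
  have hev1 : ∀ᶠ t in 𝓝 (0:ℝ), 0 < h t := hhcont.eventually (eventually_gt_nhds hh0)
  have hev2 : ∀ᶠ t in 𝓝 (0:ℝ), f (m t) = (m t - w) ^ n • g (m t) := hmt.eventually hfg
  obtain ⟨δ, hδ, hball⟩ := Metric.eventually_nhds_iff.mp (hev1.and hev2)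
  set t := δ / 2 with htdef
  have ht0 : 0 < t := by rw [htdef]; linarith
  have htδ : dist t (0:ℝ) < δ := by
    rw [Real.dist_eq, sub_zero, abs_of_pos ht0, htdef]
    linarith
  obtain ⟨hht, hfact⟩ := hball htδ
  set z := m t with hz
  -- Im z > 0
  have hzim : 0 < z.im := by
    rw [hz, hmdef]
    simp only [Complex.add_im, him, Complex.im_ofReal_mul, hudef,
      Complex.exp_ofReal_mul_I_im, zero_add]
    exact mul_pos ht0 hsinθ
  -- upper bound
  have hup : Complex.normSq (Θ z) < 1 := by
    have h1 := hΘlt z hzim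
    rw [Complex.normSq_eq_norm_sq]
    nlinarith [norm_nonneg (Θ z)]
  -- lower bound
  have hΘz : Θ z = Θ w + ((t : ℂ) * u) ^ n * g z := by
    have h0 : f z = (z - w) ^ n • g z := hfact
    rw [hfdef] at h0
    simp only [smul_eq_mul] at h0
    have h1 : z - w = (t : ℂ) * u := by rw [hz, hmdef]; ring
    rw [h1] at h0
    exact sub_eq_iff_eq_add'.mp h0
  set b := ((t : ℂ) * u) ^ n * g z with hbdef
  have hlow : Complex.normSq (Θ z) = 1 + Complex.normSq b + 2 * (t ^ n * h t) := by
    rw [hΘz, Complex.normSq_add]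
    have h1 : Complex.normSq (Θ w) = 1 := by
      rw [Complex.normSq_eq_norm_sq, habsΘw]; norm_num
    have h2 : (Θ w * (starRingEnd ℂ) b).re = t ^ n * h t := by
      have hre : (Θ w * (starRingEnd ℂ) b).re
          = ((starRingEnd ℂ) (Θ w * (starRingEnd ℂ) b)).re := (Complex.conj_re _).symm
      rw [hre, map_mul, Complex.conj_conj]
      have hb2 : (starRingEnd ℂ) (Θ w) * b
          = ((t ^ n : ℝ) : ℂ) * ((starRingEnd ℂ) (Θ w) * Complex.exp ((φ:ℂ) * Complex.I) * g z) := by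
        rw [hbdef, mul_pow, hun]
        push_cast
        ring
      rw [hb2, Complex.re_ofReal_mul]
    rw [h1, h2]
  have hb0 : 0 ≤ Complex.normSq b := Complex.normSq_nonneg b
  have htn : 0 < t ^ n := pow_pos ht0 n
  have := mul_pos htn hht
  linarith [hup, hlow]
end

section
/- Let e be a Hermite–Biehler function having no real zeros, assume the de Branges space B(e) contains a nonzero element, and let β, γ ∈ [0, π) with β ≠ γ. Then the zeros of s_β and s_γ are interlaced: if x₁ < x₂ are real numbers with s_β(x₁) = s_β(x₂) = 0 and s_β(x) ≠ 0 for all x ∈ (x₁, x₂), then there exists exactly one x ∈ (x₁, x₂) with s_γ(x) = 0. -/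
open MeasureTheory Complex

section Aux

open Filter Topology

lemma fsharp_hasDerivAt_s8 {e : ℂ → ℂ} (he : Differentiable ℂ e) (z : ℂ) :
    HasDerivAt (fsharp e) ((starRingEnd ℂ) (deriv e ((starRingEnd ℂ) z))) z := by
  rw [hasDerivAt_iff_tendsto_slope]
  have h1 : Tendsto (slope e ((starRingEnd ℂ) z)) (𝓝[≠] ((starRingEnd ℂ) z))
      (𝓝 (deriv e ((starRingEnd ℂ) z))) :=
    hasDerivAt_iff_tendsto_slope.1 (he _).hasDerivAt
  have hconj : Tendsto (fun y : ℂ => (starRingEnd ℂ) y) (𝓝[≠] z) (𝓝[≠] ((starRingEnd ℂ) z)) := by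
    apply Filter.Tendsto.inf
    · exact (Complex.continuous_conj.tendsto z)
    · refine tendsto_principal_principal.2 fun y hy => ?_
      simp only [Set.mem_compl_iff, Set.mem_singleton_iff] at *
      exact fun h => hy (by simpa using congrArg (starRingEnd ℂ) h)
  have h2 := (Complex.continuous_conj.tendsto _).comp (h1.comp hconj)
  refine h2.congr fun y => ?_
  simp only [Function.comp_apply, slope_def_field, fsharp]
  rw [div_eq_mul_inv, div_eq_mul_inv, map_mul, map_sub, map_inv₀, map_sub]
  simp

lemma deriv_entire {e : ℂ → ℂ} (he : Differentiable ℂ e) : Differentiable ℂ (deriv e) := by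
  have hA : AnalyticOnNhd ℂ e Set.univ := analyticOnNhd_univ_iff_differentiable.2 he
  exact fun z => (hA.deriv z (Set.mem_univ z)).differentiableAt

lemma fsharp_real (e : ℂ → ℂ) (x : ℝ) : fsharp e x = (starRingEnd ℂ) (e x) := by
  simp [fsharp, Complex.conj_ofReal]

lemma sfun_real (e : ℂ → ℂ) (θ : ℝ) (x : ℝ) :
    sfun e θ x = -(((Complex.exp (Complex.I * θ) * e x).im : ℝ) : ℂ) := by
  rw [sfun, fsharp_real]
  have h : Complex.exp (-(Complex.I * θ)) * (starRingEnd ℂ) (e x)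
      = (starRingEnd ℂ) (Complex.exp (Complex.I * θ) * e x) := by
    rw [map_mul, ← Complex.exp_conj]
    simp [Complex.conj_ofReal]
  rw [h, Complex.sub_conj]
  set w := Complex.exp (Complex.I * θ) * e x
  push_cast
  ring_nf
  rw [Complex.I_sq]
  ring

lemma line_hasDerivAt {e : ℂ → ℂ} (he : Differentiable ℂ e) (x : ℝ) (c : ℂ) (y : ℝ) :
    HasDerivAt (fun t : ℝ => e ((x : ℂ) + t * c)) (deriv e ((x : ℂ) + y * c) * c) y := by
  have hinner : HasDerivAt (fun t : ℝ => (x : ℂ) + t * c) c y := by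
    simpa using ((Complex.ofRealCLM.hasDerivAt (x := y)).mul_const c).const_add (x : ℂ)
  have hd := ((he _).hasDerivAt (x := (x : ℂ) + y * c)).complexToReal_fderiv
  have := hd.comp_hasDerivAt y hinner
  exact this

lemma hb_boundary {e : ℂ → ℂ} (he : IsHB e) (x : ℝ) :
    ((starRingEnd ℂ) (e x) * deriv e x).im ≤ 0 := by
  set F : ℝ → ℂ := fun y =>
    e ((x : ℂ) + y * Complex.I) * (starRingEnd ℂ) (e ((x : ℂ) + y * Complex.I))
    - e ((x : ℂ) + y * (-Complex.I)) * (starRingEnd ℂ) (e ((x : ℂ) + y * (-Complex.I))) with hF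
  have h1 := line_hasDerivAt he.1 x Complex.I 0
  have h2 := line_hasDerivAt he.1 x (-Complex.I) 0
  have hF' : HasDerivAt (fun y => (F y).re)
      (((deriv e ((x:ℂ) + (0:ℝ)*Complex.I) * Complex.I) * (starRingEnd ℂ) (e ((x:ℂ)+(0:ℝ)*Complex.I))
        + e ((x:ℂ)+(0:ℝ)*Complex.I) * (starRingEnd ℂ) (deriv e ((x:ℂ)+(0:ℝ)*Complex.I) * Complex.I)
       - ((deriv e ((x:ℂ) + (0:ℝ)*(-Complex.I)) * (-Complex.I)) * (starRingEnd ℂ) (e ((x:ℂ)+(0:ℝ)*(-Complex.I)))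
        + e ((x:ℂ)+(0:ℝ)*(-Complex.I)) * (starRingEnd ℂ) (deriv e ((x:ℂ)+(0:ℝ)*(-Complex.I)) * (-Complex.I)))).re) 0 := by
    have := ((h1.mul h1.star).sub (h2.mul h2.star))
    exact (Complex.reCLM.hasFDerivAt.comp_hasDerivAt 0 this)
  have hxx : (x:ℂ) + ((0:ℝ):ℂ) * Complex.I = (x:ℂ) := by simp
  have hxx' : (x:ℂ) + ((0:ℝ):ℂ) * (-Complex.I) = (x:ℂ) := by simp
  rw [hxx, hxx'] at hF'
  have hval : ((deriv e (x:ℂ) * Complex.I) * (starRingEnd ℂ) (e (x:ℂ))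
        + e (x:ℂ) * (starRingEnd ℂ) (deriv e (x:ℂ) * Complex.I)
       - ((deriv e (x:ℂ) * (-Complex.I)) * (starRingEnd ℂ) (e (x:ℂ))
        + e (x:ℂ) * (starRingEnd ℂ) (deriv e (x:ℂ) * (-Complex.I)))).re
      = -4 * ((starRingEnd ℂ) (e x) * deriv e x).im := by
    simp [Complex.mul_re, Complex.mul_im, Complex.sub_re, Complex.add_re,
      Complex.conj_re, Complex.conj_im, Complex.I_re, Complex.I_im]
    ring
  rw [hval] at hF'
  have hpos : ∀ y : ℝ, 0 < y → 0 < (F y).re := by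
    intro y hy
    have hz : ((x:ℂ) + y * Complex.I).im = y := by simp
    have hconj : (starRingEnd ℂ) ((x:ℂ) + y * Complex.I) = (x:ℂ) + y * (-Complex.I) := by
      simp [map_add, map_mul, Complex.conj_ofReal, Complex.conj_I]
    have := he.2 ((x:ℂ) + y * Complex.I) (by rw [hz]; exact hy)
    rw [hconj] at this
    have habs : Complex.normSq (e ((x:ℂ) + y * (-Complex.I)))
        < Complex.normSq (e ((x:ℂ) + y * Complex.I)) := by
      rw [← Complex.sq_norm, ← Complex.sq_norm]
      exact pow_lt_pow_left₀ this (norm_nonneg _) (by norm_num)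
    simp only [hF, Complex.sub_re, Complex.mul_conj, Complex.ofReal_re]
    linarith
  have hF0 : (F 0).re = 0 := by simp [hF]
  have hslope := hasDerivAt_iff_tendsto_slope.1 hF'
  have hmono : 𝓝[>] (0:ℝ) ≤ 𝓝[≠] (0:ℝ) :=
    nhdsWithin_mono 0 (fun y hy => ne_of_gt hy)
  have hev : ∀ᶠ y in 𝓝[>] (0:ℝ), 0 ≤ slope (fun y => (F y).re) 0 y := by
    filter_upwards [self_mem_nhdsWithin] with y hy
    have hy' : (0:ℝ) < y := hy
    rw [slope_def_field]
    rw [hF0]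
    exact div_nonneg (by simpa using (hpos y hy').le) (by linarith)
  have : 0 ≤ -4 * ((starRingEnd ℂ) (e x) * deriv e x).im :=
    ge_of_tendsto (hslope.mono_left hmono) hev
  linarith

noncomputable def Lfun (e : ℂ → ℂ) (x : ℝ) : ℂ := ∫ t in (0:ℝ)..x, deriv e t / e t

lemma logd_continuous {e : ℂ → ℂ} (he : Differentiable ℂ e) (hreal : ∀ x : ℝ, e x ≠ 0) :
    Continuous (fun t : ℝ => deriv e t / e t) := by
  have h1 : Continuous (fun t : ℝ => deriv e (t:ℂ)) :=
    (deriv_entire he).continuous.comp Complex.continuous_ofReal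
  have h2 : Continuous (fun t : ℝ => e (t:ℂ)) := he.continuous.comp Complex.continuous_ofReal
  exact h1.div h2 hreal

lemma Lfun_hasDerivAt {e : ℂ → ℂ} (he : Differentiable ℂ e) (hreal : ∀ x : ℝ, e x ≠ 0) (x : ℝ) :
    HasDerivAt (Lfun e) (deriv e x / e x) x :=
  ((logd_continuous he hreal).integral_hasStrictDerivAt 0 x).hasDerivAt

lemma e_eq_exp {e : ℂ → ℂ} (he : Differentiable ℂ e) (hreal : ∀ x : ℝ, e x ≠ 0) (x : ℝ) :
    e x = e 0 * Complex.exp (Lfun e x) := by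
  have key : ∀ y : ℝ, HasDerivAt (fun t : ℝ => e t * Complex.exp (-(Lfun e t))) 0 y := by
    intro y
    have h1 : HasDerivAt (fun t : ℝ => e (t:ℂ)) (deriv e y) y := ((he _).hasDerivAt).comp_ofReal
    have h2 : HasDerivAt (fun t : ℝ => Complex.exp (-(Lfun e t)))
        (Complex.exp (-(Lfun e y)) * (-(deriv e y / e y))) y := by
      have := ((Lfun_hasDerivAt he hreal y).neg).cexp
      simpa [mul_comm] using this
    have := h1.mul h2
    convert this using 1
    · rfl
    · rfl
    rw [mul_left_comm, mul_neg, mul_div_assoc', mul_div_cancel_left₀ _ (hreal y)]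
    ring
  have hconst : ∀ y : ℝ, (fun t : ℝ => e t * Complex.exp (-(Lfun e t))) y
      = (fun t : ℝ => e t * Complex.exp (-(Lfun e t))) 0 := by
    intro y
    apply is_const_of_deriv_eq_zero (fun t => (key t).differentiableAt) (fun t => (key t).deriv)
  have h0 : Lfun e 0 = 0 := by simp [Lfun]
  have := hconst x
  simp only [h0, neg_zero, Complex.exp_zero, mul_one, Complex.ofReal_zero] at this
  have hexp : Complex.exp (-(Lfun e x)) * Complex.exp (Lfun e x) = 1 := by
    rw [← Complex.exp_add]; simp
  calc e x = e x * (Complex.exp (-(Lfun e x)) * Complex.exp (Lfun e x)) := by rw [hexp, mul_one]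
    _ = (e x * Complex.exp (-(Lfun e x))) * Complex.exp (Lfun e x) := by ring
    _ = e 0 * Complex.exp (Lfun e x) := by rw [this]

lemma im_div_eq (z w : ℂ) : (z / w).im = ((starRingEnd ℂ) w * z).im / Complex.normSq w := by
  rw [Complex.div_im, Complex.mul_im, Complex.conj_re, Complex.conj_im]
  ring

lemma sfun_formula {e : ℂ → ℂ} (he : Differentiable ℂ e) (hreal : ∀ x : ℝ, e x ≠ 0)
    (θ x : ℝ) :
    sfun e θ x = -(((‖e 0‖ * Real.exp ((Lfun e x).re) *
      Real.sin (θ + Complex.arg (e 0) + (Lfun e x).im) : ℝ)) : ℂ) := by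
  rw [sfun_real]
  congr 2
  have hmain : Complex.exp (Complex.I * θ) * e x
      = ((‖e 0‖ * Real.exp ((Lfun e x).re) : ℝ) : ℂ) *
        Complex.exp (((θ + Complex.arg (e 0) + (Lfun e x).im : ℝ) : ℂ) * Complex.I) := by
    rw [e_eq_exp he hreal x]
    conv_lhs => rw [← Complex.norm_mul_exp_arg_mul_I (e 0)]
    conv_lhs => rw [← Complex.re_add_im (Lfun e x)]
    rw [Complex.exp_add]
    rw [← Complex.ofReal_exp]
    push_cast
    rw [add_mul, add_mul, Complex.exp_add, Complex.exp_add]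
    ring
  rw [hmain]
  rw [Complex.im_ofReal_mul]
  congr 1
  simpa using Complex.exp_ofReal_mul_I_im (θ + (e 0).arg + (Lfun e x).im)

lemma sfun_zero_iff {e : ℂ → ℂ} (he : Differentiable ℂ e) (hreal : ∀ x : ℝ, e x ≠ 0)
    (θ x : ℝ) :
    sfun e θ x = 0 ↔ Real.sin (θ + Complex.arg (e 0) + (Lfun e x).im) = 0 := by
  rw [sfun_formula he hreal θ x]
  rw [neg_eq_zero, Complex.ofReal_eq_zero]
  constructor
  · intro h
    have h1 : ‖e 0‖ ≠ 0 := norm_ne_zero_iff.2 (hreal 0)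
    have h2 : Real.exp ((Lfun e x).re) ≠ 0 := Real.exp_ne_zero _
    rcases mul_eq_zero.1 h with h | h
    · rcases mul_eq_zero.1 h with h | h
      · exact absurd h h1
      · exact absurd h h2
    · exact h
  · intro h; rw [h, mul_zero]

lemma vanish_global {e : ℂ → ℂ} (he : Differentiable ℂ e) {t t' : ℝ} (htt : t < t')
    (hv : ∀ s : ℝ, s ∈ Set.Ioo t t' → ((starRingEnd ℂ) (e s) * deriv e s).im = 0) :
    ∀ x : ℝ, ((starRingEnd ℂ) (e x) * deriv e x).im = 0 := by
  set D : ℂ → ℂ := fun z => deriv e z * fsharp e z - e z * deriv (fsharp e) z with hD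
  have hsharp : Differentiable ℂ (fsharp e) := fun z => (fsharp_hasDerivAt_s8 he z).differentiableAt
  have hderivsharp : deriv (fsharp e) = fsharp (deriv e) := by
    funext z
    rw [(fsharp_hasDerivAt_s8 he z).deriv]; rfl
  have hDdiff : Differentiable ℂ D := by
    apply Differentiable.sub
    · exact (deriv_entire he).mul hsharp
    · rw [hderivsharp]
      exact he.mul (fun z => (fsharp_hasDerivAt_s8 (deriv_entire he) z).differentiableAt)
  have hDreal : ∀ s : ℝ, D s = ((2 * ((starRingEnd ℂ) (e s) * deriv e s).im : ℝ) : ℂ) * Complex.I := by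
    intro s
    have h1 : fsharp e s = (starRingEnd ℂ) (e s) := by simp [fsharp, Complex.conj_ofReal]
    have h2 : deriv (fsharp e) s = (starRingEnd ℂ) (deriv e s) := by
      rw [hderivsharp]; simp [fsharp, Complex.conj_ofReal]
    rw [hD]
    simp only [h1, h2]
    rw [← Complex.sub_conj ((starRingEnd ℂ) (e s) * deriv e s)]
    rw [map_mul, Complex.conj_conj]
    ring
  have hAD : AnalyticOnNhd ℂ D Set.univ := analyticOnNhd_univ_iff_differentiable.2 hDdiff
  set m : ℝ := (t + t') / 2 with hm
  set c : ℝ := (t' - t) / 4 with hc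
  have hcpos : 0 < c := by rw [hc]; linarith
  have hfreq : ∃ᶠ z in nhdsWithin ((m : ℝ) : ℂ) {((m : ℝ) : ℂ)}ᶜ, D z = 0 := by
    have hu : Filter.Tendsto (fun n : ℕ => ((m + c * (1 / (n + 1)) : ℝ) : ℂ)) Filter.atTop
        (nhdsWithin ((m:ℝ):ℂ) {((m:ℝ):ℂ)}ᶜ) := by
      have h0 : Filter.Tendsto (fun n : ℕ => (m + c * (1 / (n + 1)) : ℝ)) Filter.atTop (nhds m) := by
        have := tendsto_one_div_add_atTop_nhds_zero_nat.const_mul c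
        simpa using tendsto_const_nhds.add this
      apply tendsto_nhdsWithin_of_tendsto_nhds_of_eventually_within
      · exact (Complex.continuous_ofReal.tendsto m).comp h0
      · filter_upwards with n
        simp only [Set.mem_compl_iff, Set.mem_singleton_iff, ne_eq, Complex.ofReal_inj]
        intro h
        have hz : c * (1 / (n + 1 : ℝ)) = 0 := by linarith
        have h1 : (0:ℝ) < 1 / (n + 1 : ℝ) := by positivity
        nlinarith
    apply hu.frequently
    apply Filter.Eventually.frequently
    filter_upwards with n
    have hmem : m + c * (1 / (n + 1)) ∈ Set.Ioo t t' := by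
      have h1 : (0:ℝ) < 1 / (n + 1 : ℝ) := by positivity
      have h2 : 1 / (n + 1 : ℝ) ≤ 1 := by
        rw [div_le_one (by positivity)]; linarith [Nat.cast_nonneg (α := ℝ) n]
      constructor
      · rw [hm]; nlinarith
      · rw [hm, hc] at *; nlinarith
    rw [hDreal, hv _ hmem]
    simp
  have hzero : Set.EqOn D 0 Set.univ :=
    hAD.eqOn_zero_of_preconnected_of_frequently_eq_zero isPreconnected_univ
      (Set.mem_univ _) hfreq
  intro x
  have := hzero (Set.mem_univ ((x : ℝ) : ℂ))
  rw [hDreal x] at this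
  simp only [Pi.zero_apply, mul_eq_zero, Complex.ofReal_eq_zero, Complex.I_ne_zero, or_false] at this
  rcases this with h | h
  · norm_num at h
  · exact h

lemma psi_hasDerivAt {e : ℂ → ℂ} (he : Differentiable ℂ e) (hreal : ∀ x : ℝ, e x ≠ 0) (x : ℝ) :
    HasDerivAt (fun t : ℝ => (Lfun e t).im) ((deriv e x / e x).im) x :=
  Complex.imCLM.hasFDerivAt.comp_hasDerivAt x (Lfun_hasDerivAt he hreal x)

lemma psi_deriv_nonpos {e : ℂ → ℂ} (he : IsHB e) (hreal : ∀ x : ℝ, e x ≠ 0) (x : ℝ) :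
    (deriv e x / e x).im ≤ 0 := by
  rw [im_div_eq]
  exact div_nonpos_of_nonpos_of_nonneg (hb_boundary he x) (Complex.normSq_nonneg _)

lemma psi_antitone {e : ℂ → ℂ} (he : IsHB e) (hreal : ∀ x : ℝ, e x ≠ 0) :
    Antitone (fun t : ℝ => (Lfun e t).im) := by
  apply antitone_of_deriv_nonpos
  · exact fun x => (psi_hasDerivAt he.1 hreal x).differentiableAt
  · intro x
    rw [(psi_hasDerivAt he.1 hreal x).deriv]
    exact psi_deriv_nonpos he hreal x

lemma psi_strictAnti {e : ℂ → ℂ} (he : IsHB e) (hreal : ∀ x : ℝ, e x ≠ 0)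
    (hnz : ∃ u : ℝ, ((starRingEnd ℂ) (e u) * deriv e u).im ≠ 0) :
    StrictAnti (fun t : ℝ => (Lfun e t).im) := by
  intro t t' htt
  rcases lt_or_eq_of_le (psi_antitone he hreal htt.le) with h | h
  · exact h
  exfalso
  obtain ⟨u, hu⟩ := hnz
  apply hu
  apply vanish_global he.1 htt
  intro s hs
  have hconst : ∀ r : ℝ, r ∈ Set.Icc t t' → (Lfun e r).im = (Lfun e t).im := by
    intro r hr
    have h1 := psi_antitone he hreal hr.1
    have h2 := psi_antitone he hreal hr.2
    simp only at h1 h2 h ⊢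
    linarith
  have hev : (fun r : ℝ => (Lfun e r).im) =ᶠ[nhds s] (fun _ => (Lfun e t).im) := by
    filter_upwards [isOpen_Ioo.mem_nhds hs] with r hr
    exact hconst r ⟨hr.1.le, hr.2.le⟩
  have hd0 : (deriv e s / e s).im = 0 := by
    rw [← (psi_hasDerivAt he.1 hreal s).deriv, hev.deriv_eq, deriv_const]
  rw [im_div_eq] at hd0
  have hns : Complex.normSq (e s) ≠ 0 := (Complex.normSq_pos.2 (hreal s)).ne'
  exact (div_eq_zero_iff.1 hd0).resolve_right hns

end Aux

/-- For `β ≠ γ`, the zeros of `s_β` and `s_γ` are interlaced: between two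
consecutive zeros of `s_β` lies exactly one zero of `s_γ`. -/
theorem statement8 (e : ℂ → ℂ) (he : IsHB e) (hreal : ∀ x : ℝ, e x ≠ 0)
    (hne : ∃ f : ℂ → ℂ, MemDB e f ∧ f ≠ 0)
    (β γ : ℝ) (hβ : β ∈ Set.Ico 0 Real.pi) (hγ : γ ∈ Set.Ico 0 Real.pi) (hβγ : β ≠ γ)
    (x₁ x₂ : ℝ) (hlt : x₁ < x₂)
    (h1 : sfun e β x₁ = 0) (h2 : sfun e β x₂ = 0)
    (hmid : ∀ x : ℝ, x ∈ Set.Ioo x₁ x₂ → sfun e β x ≠ 0) :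
    ∃! x : ℝ, x ∈ Set.Ioo x₁ x₂ ∧ sfun e γ x = 0 := by
  have hpi := Real.pi_pos
  set ψ : ℝ → ℝ := fun t => (Lfun e t).im with hψ
  set a : ℝ := Complex.arg (e 0) with ha
  -- sfun zero characterization
  have hz : ∀ θ x : ℝ, sfun e θ x = 0 ↔ Real.sin (θ + a + ψ x) = 0 := fun θ x =>
    sfun_zero_iff he.1 hreal θ x
  -- the nondegeneracy hypothesis
  have hnz : ∃ u : ℝ, ((starRingEnd ℂ) (e u) * deriv e u).im ≠ 0 := by
    by_contra hall
    push_neg at hall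
    have hderiv0 : ∀ u : ℝ, deriv ψ u = 0 := by
      intro u
      rw [hψ, (psi_hasDerivAt he.1 hreal u).deriv, im_div_eq, hall u, zero_div]
    have hconst : ∀ y : ℝ, ψ y = ψ x₁ :=
      fun y => is_const_of_deriv_eq_zero
        (fun t => (psi_hasDerivAt he.1 hreal t).differentiableAt) hderiv0 y x₁
    have hmm : (x₁ + x₂) / 2 ∈ Set.Ioo x₁ x₂ := ⟨by linarith, by linarith⟩
    apply hmid _ hmm
    rw [hz]
    rw [hconst]
    rw [← hz]
    exact h1
  have hstrict : StrictAnti ψ := psi_strictAnti he hreal hnz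
  have hcont : Continuous ψ :=
    continuous_iff_continuousAt.2 fun t => (psi_hasDerivAt he.1 hreal t).continuousAt
  -- endpoints
  obtain ⟨n₁, hn₁⟩ := Real.sin_eq_zero_iff.1 ((hz β x₁).1 h1)
  obtain ⟨n₂, hn₂⟩ := Real.sin_eq_zero_iff.1 ((hz β x₂).1 h2)
  have hψlt : ψ x₂ < ψ x₁ := hstrict hlt
  have hn21 : n₂ < n₁ := by
    have h' : (n₂:ℝ) * Real.pi < (n₁:ℝ) * Real.pi := by rw [hn₁, hn₂]; linarith
    have h'' : (n₂:ℝ) < (n₁:ℝ) := lt_of_mul_lt_mul_right h' hpi.le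
    exact_mod_cast h''
  -- consecutive: n₂ = n₁ - 1
  have hgap : n₂ = n₁ - 1 := by
    by_contra hne'
    have hle : n₂ ≤ n₁ - 2 := by omega
    set v : ℝ := ((n₁ - 1 : ℤ) : ℝ) * Real.pi - β - a with hv
    have hvmem : v ∈ Set.Ioo (ψ x₂) (ψ x₁) := by
      constructor
      · have : (n₂ : ℝ) * Real.pi ≤ ((n₁ - 2 : ℤ) : ℝ) * Real.pi := by
          apply mul_le_mul_of_nonneg_right _ hpi.le
          exact_mod_cast hle
        have h12 : ((n₁ - 2 : ℤ) : ℝ) * Real.pi < ((n₁ - 1 : ℤ) : ℝ) * Real.pi := by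
          apply mul_lt_mul_of_pos_right _ hpi
          exact_mod_cast (by omega : (n₁ - 2 : ℤ) < n₁ - 1)
        have := hn₂
        rw [hv]; push_cast at *; linarith
      · have h12 : ((n₁ - 1 : ℤ) : ℝ) * Real.pi < (n₁:ℝ) * Real.pi := by
          apply mul_lt_mul_of_pos_right _ hpi
          exact_mod_cast (by omega : (n₁ - 1 : ℤ) < n₁)
        rw [hv]; push_cast at *; linarith
    obtain ⟨t, htmem, htv⟩ := intermediate_value_Ioo' hlt.le hcont.continuousOn hvmem
    apply hmid t htmem
    rw [hz]
    apply Real.sin_eq_zero_iff.2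
    exact ⟨n₁ - 1, by rw [htv, hv]; ring⟩
  -- the target integer m
  set d : ℝ := γ - β with hd
  have hdlt : d < Real.pi := by
    rcases hγ with ⟨hγ0, hγπ⟩; rcases hβ with ⟨hβ0, _⟩; rw [hd]; linarith
  have hdgt : -Real.pi < d := by
    rcases hβ with ⟨_, hβπ⟩; rcases hγ with ⟨hγ0, _⟩; rw [hd]; linarith
  have hdne : d ≠ 0 := fun h => hβγ (by rw [hd] at h; linarith)
  set m : ℤ := if β < γ then n₁ else n₁ - 1 with hm
  -- the bounds for m
  have hmbounds : ((n₁ - 1 : ℤ) : ℝ) * Real.pi + d < (m:ℝ) * Real.pi ∧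
      (m:ℝ) * Real.pi < (n₁:ℝ) * Real.pi + d := by
    rw [hm]
    by_cases hc : β < γ
    · rw [if_pos hc]
      have hd0 : 0 < d := by rw [hd]; linarith
      constructor
      · push_cast; nlinarith
      · linarith
    · rw [if_neg hc]
      have hd0 : d < 0 := by
        rcases lt_or_eq_of_le (not_lt.1 hc) with h | h
        · rw [hd]; linarith
        · exact absurd h.symm hβγ
      constructor
      · push_cast; nlinarith
      · push_cast; nlinarith
  -- uniqueness of such an integer
  have hmuniq : ∀ k : ℤ, ((n₁ - 1 : ℤ) : ℝ) * Real.pi + d < (k:ℝ) * Real.pi →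
      (k:ℝ) * Real.pi < (n₁:ℝ) * Real.pi + d → k = m := by
    intro k hk1 hk2
    have hb1 := hmbounds.1
    have hb2 := hmbounds.2
    have hlt1 : (k:ℝ) * Real.pi < (m:ℝ) * Real.pi + Real.pi := by push_cast at *; nlinarith
    have hlt2 : (m:ℝ) * Real.pi < (k:ℝ) * Real.pi + Real.pi := by push_cast at *; nlinarith
    have hk1' : k < m + 1 := by
      have h' : (k:ℝ) * Real.pi < ((m + 1 : ℤ):ℝ) * Real.pi := by push_cast; linarith
      have h'' : (k:ℝ) < ((m + 1 : ℤ):ℝ) := lt_of_mul_lt_mul_right h' hpi.le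
      exact_mod_cast h''
    have hk2' : m < k + 1 := by
      have h' : (m:ℝ) * Real.pi < ((k + 1 : ℤ):ℝ) * Real.pi := by push_cast; linarith
      have h'' : (m:ℝ) < ((k + 1 : ℤ):ℝ) := lt_of_mul_lt_mul_right h' hpi.le
      exact_mod_cast h''
    omega
  -- the value of ψ at the zero of s_γ
  set v : ℝ := (m:ℝ) * Real.pi - γ - a with hv
  have hψx₂ : ψ x₂ = ((n₁ - 1:ℤ):ℝ) * Real.pi - β - a := by
    have h' := hn₂; rw [hgap] at h'; linarith
  have hψx₁ : ψ x₁ = (n₁:ℝ) * Real.pi - β - a := by linarith [hn₁]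
  have hvmem : v ∈ Set.Ioo (ψ x₂) (ψ x₁) := by
    constructor
    · rw [hv, hψx₂]; have := hmbounds.1; rw [hd] at this; linarith
    · rw [hv, hψx₁]; have := hmbounds.2; rw [hd] at this; linarith
  obtain ⟨t, htmem, htv⟩ := intermediate_value_Ioo' hlt.le hcont.continuousOn hvmem
  refine ⟨t, ⟨htmem, ?_⟩, ?_⟩
  · rw [hz]
    apply Real.sin_eq_zero_iff.2
    exact ⟨m, by rw [htv, hv]; ring⟩
  · rintro t' ⟨ht'mem, ht'z⟩
    obtain ⟨k, hk⟩ := Real.sin_eq_zero_iff.1 ((hz γ t').1 ht'z)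
    have hψt' : ψ t' = (k:ℝ) * Real.pi - γ - a := by linarith [hk]
    have hb1 : ψ x₂ < ψ t' := hstrict ht'mem.2
    have hb2 : ψ t' < ψ x₁ := hstrict ht'mem.1
    have hkm : k = m := by
      apply hmuniq
      · rw [hψx₂] at hb1; rw [hψt'] at hb1; rw [hd]; linarith
      · rw [hψx₁] at hb2; rw [hψt'] at hb2; rw [hd]; linarith
    have : ψ t' = ψ t := by rw [hψt', hkm, htv, hv]
    by_contra hne'
    rcases lt_or_gt_of_ne hne' with h | h
    · exact absurd this (ne_of_gt (hstrict h))
    · exact absurd this.symm (ne_of_gt (hstrict h))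
end

section
/- Let e be a Hermite–Biehler function. An entire function h is associated to the de Branges space B(e) if and only if there exist f, g ∈ B(e) such that h(z) = f(z) + z·g(z) for all z ∈ ℂ; in short, assoc B(e) = B(e) + z·B(e). -/
open MeasureTheory Complex

namespace S11

open Complex MeasureTheory Asymptotics Filter

variable {e : ℂ → ℂ}

lemma abs_fsharp (f : ℂ → ℂ) (z : ℂ) :
    ‖fsharp f z‖ = ‖f ((starRingEnd ℂ) z)‖ := Complex.norm_conj _

lemma hb_ne (he : IsHB e) {z : ℂ} (hz : 0 < z.im) : e z ≠ 0 := by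
  intro h0
  have := he.2 z hz
  rw [h0] at this
  simp only [norm_zero] at this
  exact absurd this (not_lt.2 (norm_nonneg _))

lemma diff_dslope {f : ℂ → ℂ} (hf : Differentiable ℂ f) (w : ℂ) :
    Differentiable ℂ (dslope f w) := by
  intro z
  rcases eq_or_ne z w with rfl | hz
  · rcases (hf.analyticAt z) with ⟨p, hp⟩
    exact (hp.has_fpower_series_dslope_fslope).analyticAt.differentiableAt
  · exact (differentiableAt_dslope_of_ne hz).2 (hf z)

lemma differentiable_fsharp {f : ℂ → ℂ} (hf : Differentiable ℂ f) :
    Differentiable ℂ (fsharp f) := by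
  intro z
  set d := deriv f ((starRingEnd ℂ) z) with hdd
  have hd := (hf ((starRingEnd ℂ) z)).hasDerivAt
  rw [hasDerivAt_iff_isLittleO] at hd
  have htend : Filter.Tendsto (fun x' : ℂ => (starRingEnd ℂ) x') (nhds z)
      (nhds ((starRingEnd ℂ) z)) := Complex.continuous_conj.tendsto z
  have h2 := hd.comp_tendsto htend
  have goal : HasDerivAt (fsharp f) ((starRingEnd ℂ) d) z := by
    rw [hasDerivAt_iff_isLittleO]
    rw [← isLittleO_norm_norm]
    rw [← isLittleO_norm_norm] at h2
    convert h2 using 1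
    · funext x'
      simp only [Function.comp]
      rw [← RCLike.norm_conj (K := ℂ) (fsharp f x' - fsharp f z - (x' - z) • (starRingEnd ℂ) d)]
      congr 1
      simp only [fsharp, map_sub, map_mul, smul_eq_mul, Complex.conj_conj, hdd]
    · funext x'
      simp only [Function.comp]
      rw [← RCLike.norm_conj (K := ℂ) (x' - z), map_sub]
  exact goal.differentiableAt

lemma continuous_fsharp {f : ℂ → ℂ} (hf : Continuous f) : Continuous (fsharp f) :=
  Complex.continuous_conj.comp (hf.comp Complex.continuous_conj)

lemma aesm1 (hec : Continuous e) {q : ℂ → ℂ} (hq : Continuous q) :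
    AEStronglyMeasurable (fun x : ℝ => ‖q x / e x‖ ^ 2)
      (volume : Measure ℝ) := by
  have : Measurable fun x : ℝ => q x / e x :=
    ((hq.comp continuous_ofReal).measurable).div ((hec.comp continuous_ofReal).measurable)
  exact ((continuous_norm.measurable.comp this).pow_const 2).aestronglyMeasurable

lemma aesm2 (hec : Continuous e) {q : ℂ → ℂ} (hq : Continuous q) :
    AEStronglyMeasurable (fun x : ℝ => (‖q x / e x‖ / (1 + |x|)) ^ 2)
      (volume : Measure ℝ) := by
  have h1 : Measurable fun x : ℝ => q x / e x :=
    ((hq.comp continuous_ofReal).measurable).div ((hec.comp continuous_ofReal).measurable)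
  have h2 : Measurable fun x : ℝ => ‖q x / e x‖ / (1 + |x|) :=
    (continuous_norm.measurable.comp h1).div
      ((continuous_const.add (_root_.continuous_abs : Continuous fun x : ℝ => |x|)).measurable)
  exact (h2.pow_const 2).aestronglyMeasurable

lemma sqrt_le_one_add {t : ℝ} (ht : 0 ≤ t) : Real.sqrt t ≤ 1 + t := by
  rcases le_or_gt t 1 with h | h
  · have := Real.sqrt_le_one.2 h
    linarith
  · have h1 : Real.sqrt t ≤ t := by
      nlinarith [Real.sq_sqrt ht, Real.sqrt_nonneg t]
    linarith

lemma abs_sub_le' (a b : ℂ) : ‖a - b‖ ≤ ‖a‖ + ‖b‖ := by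
  have := norm_add_le a (-b)
  simpa [sub_eq_add_neg] using this

lemma near_bound (he : IsHB e) {q : ℂ → ℂ} (hq : Continuous q) (p : ℂ) {ρ : ℝ}
    (hρ : 0 < ρ) (hne : ∀ z : ℂ, dist z p ≤ ρ → 0 ≤ z.im → e z ≠ 0) :
    ∃ M, 0 ≤ M ∧ ∀ z : ℂ, dist z p ≤ ρ → 0 ≤ z.im → ‖q z / e z‖ ≤ M := by
  set S : Set ℂ := Metric.closedBall p ρ ∩ {z : ℂ | 0 ≤ z.im} with hS
  have hcomp : IsCompact S :=
    (isCompact_closedBall p ρ).inter_right (isClosed_le continuous_const Complex.continuous_im)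
  have hcont : ContinuousOn (fun z => ‖q z / e z‖) S := by
    apply continuous_norm.comp_continuousOn
    exact hq.continuousOn.div he.1.continuous.continuousOn
      (fun z hz => hne z (Metric.mem_closedBall.1 hz.1) hz.2)
  obtain ⟨C, hC⟩ := hcomp.exists_bound_of_continuousOn hcont
  refine ⟨max C 0, le_max_right _ _, fun z h1 h2 => ?_⟩
  have hzS : z ∈ S := ⟨Metric.mem_closedBall.2 h1, h2⟩
  have := hC z hzS
  rw [Real.norm_eq_abs, _root_.abs_of_nonneg (norm_nonneg _)] at this
  exact le_trans this (le_max_left _ _)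

lemma rho_choice (he : IsHB e) {w : ℂ} (hw : w.im ≠ 0 ∨ e w ≠ 0) :
    ∃ ρ : ℝ, 0 < ρ ∧ ρ ≤ 1 ∧ ∀ z : ℂ, dist z w ≤ ρ → 0 ≤ z.im → e z ≠ 0 := by
  by_cases hew : e w ≠ 0
  · have h1 : ∀ᶠ z in nhds w, e z ≠ 0 := he.1.continuous.continuousAt.eventually_ne hew
    obtain ⟨δ, hδ, hball⟩ := Metric.eventually_nhds_iff.1 h1
    refine ⟨min (δ/2) 1, by positivity, min_le_right _ _, fun z h1 _ => ?_⟩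
    exact hball (lt_of_le_of_lt (le_trans h1 (min_le_left _ _)) (by linarith))
  · push_neg at hew
    have hwim : w.im ≠ 0 := hw.resolve_right (by simpa using hew)
    have hneg : w.im < 0 := by
      rcases lt_or_gt_of_ne hwim with h | h
      · exact h
      · exact absurd hew (hb_ne he h)
    refine ⟨min (-w.im/2) 1, lt_min (by linarith) one_pos, min_le_right _ _, fun z h1 h2 => ?_⟩
    exfalso
    have him : |z.im - w.im| ≤ dist z w := by
      rw [Complex.dist_eq]
      simpa using Complex.abs_im_le_norm (z - w)
    have := abs_le.1 him
    have hle : dist z w ≤ -w.im/2 := le_trans h1 (min_le_left _ _)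
    linarith [this.2]

lemma real_ne (he : IsHB e) {f : ℂ → ℂ} {w : ℂ} (hf : MemDB e f) (hwim : w.im = 0)
    (hfw : f w ≠ 0) : e w ≠ 0 := by
  intro hew
  obtain ⟨hfd, -, c, hc, hb⟩ := hf
  -- bound for dslope e w on the segment
  have hcont : Continuous fun y : ℝ => ‖dslope e w (w + y * Complex.I)‖ :=
    continuous_norm.comp ((diff_dslope he.1 w).continuous.comp (by continuity))
  obtain ⟨M, hM⟩ := (isCompact_Icc (a := (0:ℝ)) (b := 1)).exists_bound_of_continuousOn
    hcont.continuousOn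
  have hM0 : 0 ≤ M := le_trans (norm_nonneg _) (hM 0 (by norm_num))
  -- f tends to f w along the vertical segment
  have T1 : Filter.Tendsto (fun y : ℝ => f (w + y * Complex.I)) (nhdsWithin 0 (Set.Ioi 0))
      (nhds (f w)) := by
    have : Filter.Tendsto (fun y : ℝ => f (w + y * Complex.I)) (nhds 0) (nhds (f w)) := by
      have hc2 : Continuous fun y : ℝ => f (w + y * Complex.I) :=
        hfd.continuous.comp (by continuity)
      have := hc2.tendsto 0
      simpa using this
    exact this.mono_left nhdsWithin_le_nhds
  have T2 : Filter.Tendsto (fun y : ℝ => f (w + y * Complex.I)) (nhdsWithin 0 (Set.Ioi 0))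
      (nhds 0) := by
    apply squeeze_zero_norm' (a := fun y : ℝ => c * M * Real.sqrt y)
    · have hIoc : Set.Ioc (0:ℝ) 1 ∈ nhdsWithin (0:ℝ) (Set.Ioi 0) :=
        Ioc_mem_nhdsGT_of_mem ⟨le_refl _, one_pos⟩
      filter_upwards [hIoc] with y hy
      set z := w + y * Complex.I with hz
      have hzim : z.im = y := by simp [hz, hwim]
      have hy0 : 0 < y := hy.1
      have hzpos : 0 < z.im := by rw [hzim]; exact hy0
      have hez : e z ≠ 0 := hb_ne he hzpos
      have hbz := (hb z hzpos).1
      rw [norm_div, div_le_div_iff₀ (norm_pos_iff.2 hez) (Real.sqrt_pos.2 hzpos)] at hbz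
      -- |e z| ≤ y * M
      have hez_bound : ‖e z‖ ≤ y * M := by
        have hsub : e z - e w = (z - w) * dslope e w z := by
          have := sub_smul_dslope e w z
          rw [smul_eq_mul] at this
          exact this.symm
        have heq : ‖e z‖ = ‖(z - w) * dslope e w z‖ := by
          rw [← hsub, hew, sub_zero]
        rw [heq, norm_mul]
        have h1 : ‖z - w‖ = y := by
          have : z - w = (y : ℂ) * Complex.I := by rw [hz]; ring
          rw [this, norm_mul, Complex.norm_I, mul_one, Complex.norm_real, Real.norm_eq_abs,
            _root_.abs_of_nonneg hy0.le]
        rw [h1]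
        have h2 : ‖dslope e w z‖ ≤ M := by
          have := hM y ⟨hy0.le, hy.2⟩
          rw [Real.norm_eq_abs, _root_.abs_of_nonneg (norm_nonneg _)] at this
          simpa [hz] using this
        exact mul_le_mul_of_nonneg_left h2 hy0.le
      -- combine
      have hfin : ‖f z‖ ≤ c * M * Real.sqrt y := by
        have hs : (0:ℝ) < Real.sqrt y := Real.sqrt_pos.2 hy0
        have h3 : ‖f z‖ * Real.sqrt y ≤ c * (y * M) := by
          calc ‖f z‖ * Real.sqrt y ≤ c * ‖e z‖ := by
                have := hbz; rw [hzim] at this; linarith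
          _ ≤ c * (y * M) := mul_le_mul_of_nonneg_left hez_bound hc
        nlinarith [h3, hs, Real.mul_self_sqrt hy0.le, norm_nonneg (f z)]
      exact hfin
    · have : Filter.Tendsto (fun y : ℝ => c * M * Real.sqrt y) (nhds 0) (nhds 0) := by
        have h0 : Filter.Tendsto Real.sqrt (nhds 0) (nhds (Real.sqrt 0)) :=
          Real.continuous_sqrt.tendsto 0
        rw [Real.sqrt_zero] at h0
        simpa using h0.const_mul (c * M)
      exact this.mono_left nhdsWithin_le_nhds
  have := tendsto_nhds_unique T1 T2
  exact hfw this

lemma fsharp_const_mul (a : ℂ) (f : ℂ → ℂ) (z : ℂ) :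
    fsharp (fun z => a * f z) z = (starRingEnd ℂ) a * fsharp f z := by
  simp [fsharp, map_mul]

lemma fsharp_add (f g : ℂ → ℂ) (z : ℂ) :
    fsharp (fun z => f z + g z) z = fsharp f z + fsharp g z := by
  simp [fsharp, map_add]

lemma memDB_const_mul (he : IsHB e) (a : ℂ) {f : ℂ → ℂ} (hf : MemDB e f) :
    MemDB e (fun z => a * f z) := by
  obtain ⟨hfd, hfi, c, hc, hb⟩ := hf
  refine ⟨hfd.const_mul a, ?_, ‖a‖ * c, mul_nonneg (norm_nonneg a) hc,
    fun z hz => ?_⟩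
  · have : (fun x : ℝ => ‖(a * f x) / e x‖ ^ 2)
        = fun x : ℝ => ‖a‖ ^ 2 * ‖f x / e x‖ ^ 2 := by
      funext x
      rw [mul_div_assoc, norm_mul, mul_pow]
    rw [this]
    exact hfi.const_mul _
  · constructor
    · rw [mul_div_assoc, norm_mul, mul_div_assoc]
      exact mul_le_mul_of_nonneg_left (hb z hz).1 (norm_nonneg a)
    · rw [fsharp_const_mul, mul_div_assoc, norm_mul, Complex.norm_conj, mul_div_assoc]
      exact mul_le_mul_of_nonneg_left (hb z hz).2 (norm_nonneg a)

lemma memDB_add (he : IsHB e) {f g : ℂ → ℂ} (hf : MemDB e f) (hg : MemDB e g) :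
    MemDB e (fun z => f z + g z) := by
  obtain ⟨hfd, hfi, c, hc, hb⟩ := hf
  obtain ⟨hgd, hgi, c', hc', hb'⟩ := hg
  refine ⟨hfd.add hgd, ?_, c + c', by linarith, fun z hz => ?_⟩
  · apply Integrable.mono' ((hfi.const_mul 2).add (hgi.const_mul 2))
      (aesm1 he.1.continuous (hfd.continuous.add hgd.continuous))
    filter_upwards with x
    simp only [Pi.add_apply]
    rw [Real.norm_eq_abs, _root_.abs_of_nonneg (by positivity)]
    have h1 : ‖(f x + g x) / e x‖ ≤ ‖f x / e x‖ + ‖g x / e x‖ := by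
      rw [add_div]
      exact norm_add_le _ _
    nlinarith [norm_nonneg ((f x + g x) / e x), norm_nonneg (f x / e x),
      norm_nonneg (g x / e x), sq_nonneg (‖f x / e x‖ - ‖g x / e x‖)]
  · constructor
    · rw [add_div]
      calc ‖f z / e z + g z / e z‖
          ≤ ‖f z / e z‖ + ‖g z / e z‖ := norm_add_le _ _
        _ ≤ c / Real.sqrt z.im + c' / Real.sqrt z.im := add_le_add (hb z hz).1 (hb' z hz).1
        _ = (c + c') / Real.sqrt z.im := (add_div _ _ _).symm
    · rw [fsharp_add, add_div]
      calc ‖fsharp f z / e z + fsharp g z / e z‖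
          ≤ ‖fsharp f z / e z‖ + ‖fsharp g z / e z‖ :=
            norm_add_le _ _
        _ ≤ c / Real.sqrt z.im + c' / Real.sqrt z.im := add_le_add (hb z hz).2 (hb' z hz).2
        _ = (c + c') / Real.sqrt z.im := (add_div _ _ _).symm

lemma core (he : IsHB e) {P : ℂ → ℂ} {w : ℂ}
    (hP : Differentiable ℂ P) (hPw : P w = 0)
    (hInt : Integrable (fun x : ℝ => (‖P x / e x‖ / (1 + |x|)) ^ 2))
    {c : ℝ} (hc : 0 ≤ c)
    (hbd : ∀ z : ℂ, 0 < z.im →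
      ‖P z / e z‖ ≤ c * (1 + ‖z‖) / Real.sqrt z.im)
    (hbd' : ∀ z : ℂ, 0 < z.im →
      ‖fsharp P z / e z‖ ≤ c * (1 + ‖z‖) / Real.sqrt z.im)
    (hw1 : w.im ≠ 0 ∨ e w ≠ 0)
    (hw2 : ((starRingEnd ℂ) w).im ≠ 0 ∨ e ((starRingEnd ℂ) w) ≠ 0) :
    MemDB e (dslope P w) := by
  obtain ⟨ρ₁, hρ₁, hρ₁le, hball₁⟩ := rho_choice he hw1
  obtain ⟨ρ₂, hρ₂, hρ₂le, hball₂⟩ := rho_choice he hw2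
  set ρ := min ρ₁ ρ₂ with hρdef
  have hρ : 0 < ρ := lt_min hρ₁ hρ₂
  have hρle : ρ ≤ 1 := le_trans (min_le_left _ _) hρ₁le
  have hqd : Differentiable ℂ (dslope P w) := diff_dslope hP w
  have hqval : ∀ z : ℂ, z ≠ w → dslope P w z = P z / (z - w) := by
    intro z hz
    rw [dslope_of_ne _ hz, slope_def_field, hPw, sub_zero]
  set A : ℝ := (1 + ‖w‖) / ρ + 1 with hA
  have hA0 : 0 < A := by positivity
  have key : ∀ p z : ℂ, ‖p‖ = ‖w‖ → ρ ≤ dist z p →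
      1 + ‖z‖ ≤ A * dist z p := by
    intro p z hp hd
    have h1 : ‖z‖ ≤ ‖p‖ + dist z p := by
      rw [Complex.dist_eq]
      calc ‖z‖ = ‖p + (z - p)‖ := by ring_nf
      _ ≤ ‖p‖ + ‖z - p‖ := norm_add_le _ _
    have h2 : 1 + ‖w‖ ≤ ((1 + ‖w‖) / ρ) * dist z p := by
      rw [div_mul_eq_mul_div, le_div_iff₀ hρ]
      exact mul_le_mul_of_nonneg_left hd (by positivity)
    rw [hA]
    rw [hp] at h1
    nlinarith
  obtain ⟨M₁, hM₁0, hM₁⟩ := near_bound he hqd.continuous w hρ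
    (fun z h1 h2 => hball₁ z (le_trans h1 (min_le_left _ _)) h2)
  obtain ⟨M₂, hM₂0, hM₂⟩ := near_bound he (continuous_fsharp hqd.continuous)
    ((starRingEnd ℂ) w) hρ (fun z h1 h2 => hball₂ z (le_trans h1 (min_le_right _ _)) h2)
  have hfar : ∀ z : ℂ, z ≠ w → ‖dslope P w z / e z‖
      = ‖P z / e z‖ / dist z w := by
    intro z hz
    rw [hqval z hz, div_right_comm, norm_div, Complex.dist_eq]
  have hfar' : ∀ z : ℂ, (starRingEnd ℂ) z ≠ w →
      ‖fsharp (dslope P w) z / e z‖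
      = ‖fsharp P z / e z‖ / dist z ((starRingEnd ℂ) w) := by
    intro z hz
    have h1 : ‖fsharp (dslope P w) z‖
        = ‖dslope P w ((starRingEnd ℂ) z)‖ := abs_fsharp _ z
    have h2 : ‖fsharp P z‖ = ‖P ((starRingEnd ℂ) z)‖ := abs_fsharp P z
    have h3 : ‖(starRingEnd ℂ) z - w‖ = dist z ((starRingEnd ℂ) w) := by
      rw [← Complex.dist_eq]
      calc dist ((starRingEnd ℂ) z) w
          = dist ((starRingEnd ℂ) z) ((starRingEnd ℂ) ((starRingEnd ℂ) w)) := by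
            rw [Complex.conj_conj]
        _ = dist z ((starRingEnd ℂ) w) := Complex.dist_conj_conj _ _
    rw [norm_div, h1, hqval _ hz, norm_div, h3, norm_div, h2]
    exact div_right_comm _ _ _
  refine ⟨hqd, ?_, ?_⟩
  · -- integrability
    have hmeas := aesm1 he.1.continuous hqd.continuous
    set D : ℝ → ℝ := fun x => A ^ 2 * (‖P x / e x‖ / (1 + |x|)) ^ 2 +
      Set.indicator (Set.Icc (w.re - 1) (w.re + 1)) (fun _ => M₁ ^ 2) x with hD
    have hDint : Integrable D := by
      apply (hInt.const_mul (A ^ 2)).add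
      rw [integrable_indicator_iff measurableSet_Icc]
      exact integrableOn_const measure_Icc_lt_top.ne
    apply Integrable.mono' hDint hmeas
    filter_upwards with x
    rw [Real.norm_eq_abs, _root_.abs_of_nonneg (by positivity)]
    have hind0 : 0 ≤ Set.indicator (Set.Icc (w.re - 1) (w.re + 1)) (fun _ => M₁ ^ 2) x :=
      Set.indicator_nonneg (fun _ _ => sq_nonneg _) x
    rcases le_or_gt (dist (x : ℂ) w) ρ with hnear | hfarc
    · have h1 : ‖dslope P w x / e x‖ ≤ M₁ := hM₁ x hnear (by simp)
      have h2 : ‖dslope P w x / e x‖ ^ 2 ≤ M₁ ^ 2 :=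
        pow_le_pow_left₀ (norm_nonneg _) h1 2
      have hxmem : x ∈ Set.Icc (w.re - 1) (w.re + 1) := by
        have h3 : |x - w.re| ≤ dist (x : ℂ) w := by
          rw [Complex.dist_eq]
          have := Complex.abs_re_le_norm ((x : ℂ) - w)
          simpa using this
        have h4 := abs_le.1 (le_trans h3 (le_trans hnear hρle))
        exact ⟨by linarith [h4.1], by linarith [h4.2]⟩
      simp only [hD, Set.indicator_of_mem hxmem]
      nlinarith [sq_nonneg (‖P x / e x‖ / (1 + |x|)), hA0, h2]
    · have hxw : (x : ℂ) ≠ w := by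
        intro hxx
        rw [hxx] at hfarc
        simp at hfarc
        linarith
      have h1 := hfar x hxw
      have habs : ‖(x : ℂ)‖ = |x| := by simp
      have hdpos : 0 < dist (x : ℂ) w := lt_trans hρ hfarc
      have hkey' : 1 + |x| ≤ A * dist (x : ℂ) w := by
        rw [← habs]; exact key w x rfl hfarc.le
      have hx0 : (0 : ℝ) < 1 + |x| := by positivity
      have hun : 0 ≤ ‖P x / e x‖ / (1 + |x|) := by positivity
      have hueq : ‖P x / e x‖
          = (‖P x / e x‖ / (1 + |x|)) * (1 + |x|) :=
        (div_mul_cancel₀ _ hx0.ne').symm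
      have h2 : ‖dslope P w x / e x‖
          ≤ (‖P x / e x‖ / (1 + |x|)) * A := by
        rw [h1, div_le_iff₀ hdpos]
        nlinarith [hueq, mul_le_mul_of_nonneg_left hkey' hun]
      have h3 : ‖dslope P w x / e x‖ ^ 2
          ≤ ((‖P x / e x‖ / (1 + |x|)) * A) ^ 2 :=
        pow_le_pow_left₀ (norm_nonneg _) h2 2
      simp only [hD]
      nlinarith [hind0, h3]
  · -- pointwise bounds
    refine ⟨max (c * A) ((max M₁ M₂) * Real.sqrt (|w.im| + 1)),
      le_trans (mul_nonneg hc hA0.le) (le_max_left _ _), fun z hz => ?_⟩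
    have hs : 0 < Real.sqrt z.im := Real.sqrt_pos.2 hz
    constructor
    · rcases le_or_gt (dist z w) ρ with hnear | hfarc
      · have h1 := hM₁ z hnear hz.le
        have h2 : z.im ≤ |w.im| + 1 := by
          have h3 : |z.im - w.im| ≤ dist z w := by
            rw [Complex.dist_eq]; simpa using Complex.abs_im_le_norm (z - w)
          have h4 := (abs_le.1 h3).2
          have h5 := le_abs_self w.im
          have h6 := le_trans hnear hρle
          linarith
        calc ‖dslope P w z / e z‖ ≤ M₁ := h1
        _ ≤ max (c * A) ((max M₁ M₂) * Real.sqrt (|w.im| + 1)) / Real.sqrt z.im := by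
            rw [le_div_iff₀ hs]
            calc M₁ * Real.sqrt z.im ≤ (max M₁ M₂) * Real.sqrt (|w.im| + 1) :=
                mul_le_mul (le_max_left _ _) (Real.sqrt_le_sqrt h2) (Real.sqrt_nonneg _)
                  (le_trans hM₁0 (le_max_left _ _))
            _ ≤ _ := le_max_right _ _
      · have hzw : z ≠ w := by
          intro hzz; rw [hzz] at hfarc; simp at hfarc; linarith
        have hdpos : 0 < dist z w := lt_trans hρ hfarc
        have h2 : ‖P z / e z‖ * Real.sqrt z.im ≤ c * (1 + ‖z‖) := by
          rw [← le_div_iff₀ hs]; exact hbd z hz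
        rw [hfar z hzw, div_le_div_iff₀ hdpos hs]
        calc ‖P z / e z‖ * Real.sqrt z.im ≤ c * (1 + ‖z‖) := h2
        _ ≤ c * (A * dist z w) := mul_le_mul_of_nonneg_left (key w z rfl hfarc.le) hc
        _ = (c * A) * dist z w := by ring
        _ ≤ _ := mul_le_mul_of_nonneg_right (le_max_left _ _) dist_nonneg
    · rcases le_or_gt (dist z ((starRingEnd ℂ) w)) ρ with hnear | hfarc
      · have h1 := hM₂ z hnear hz.le
        have h2 : z.im ≤ |w.im| + 1 := by
          have h3 : |z.im - ((starRingEnd ℂ) w).im| ≤ dist z ((starRingEnd ℂ) w) := by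
            rw [Complex.dist_eq]; simpa using Complex.abs_im_le_norm (z - (starRingEnd ℂ) w)
          have h4 := (abs_le.1 h3).2
          have h5 : -w.im ≤ |w.im| := neg_le_abs _
          have h6 := le_trans hnear hρle
          rw [Complex.conj_im] at h4
          linarith
        calc ‖fsharp (dslope P w) z / e z‖ ≤ M₂ := h1
        _ ≤ max (c * A) ((max M₁ M₂) * Real.sqrt (|w.im| + 1)) / Real.sqrt z.im := by
            rw [le_div_iff₀ hs]
            calc M₂ * Real.sqrt z.im ≤ (max M₁ M₂) * Real.sqrt (|w.im| + 1) :=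
                mul_le_mul (le_max_right _ _) (Real.sqrt_le_sqrt h2) (Real.sqrt_nonneg _)
                  (le_trans hM₂0 (le_max_right _ _))
            _ ≤ _ := le_max_right _ _
      · have hzw : (starRingEnd ℂ) z ≠ w := by
          intro hzz
          have : dist z ((starRingEnd ℂ) w) = 0 := by
            rw [← hzz, Complex.conj_conj, dist_self]
          linarith [lt_trans hρ hfarc, this]
        have hdpos : 0 < dist z ((starRingEnd ℂ) w) := lt_trans hρ hfarc
        have h2 : ‖fsharp P z / e z‖ * Real.sqrt z.im
            ≤ c * (1 + ‖z‖) := by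
          rw [← le_div_iff₀ hs]; exact hbd' z hz
        rw [hfar' z hzw, div_le_div_iff₀ hdpos hs]
        calc ‖fsharp P z / e z‖ * Real.sqrt z.im ≤ c * (1 + ‖z‖) := h2
        _ ≤ c * (A * dist z ((starRingEnd ℂ) w)) :=
            mul_le_mul_of_nonneg_left (key ((starRingEnd ℂ) w) z (Complex.norm_conj w)
              hfarc.le) hc
        _ = (c * A) * dist z ((starRingEnd ℂ) w) := by ring
        _ ≤ _ := mul_le_mul_of_nonneg_right (le_max_left _ _) dist_nonneg

-- convert constant bound to standard form
lemma const_to_std {q : ℂ → ℂ} {C : ℝ} (hC : 0 ≤ C)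
    (hq : ∀ z : ℂ, 0 < z.im → ‖q z / e z‖ ≤ C) :
    ∀ z : ℂ, 0 < z.im → ‖q z / e z‖ ≤ C * (1 + ‖z‖) / Real.sqrt z.im := by
  intro z hz
  have hs : 0 < Real.sqrt z.im := Real.sqrt_pos.2 hz
  have h1 : Real.sqrt z.im ≤ 1 + ‖z‖ := by
    have h2 : z.im ≤ ‖z‖ := le_trans (le_abs_self _) (Complex.abs_im_le_norm z)
    linarith [sqrt_le_one_add hz.le]
  calc ‖q z / e z‖ ≤ C := hq z hz
  _ ≤ C * (1 + ‖z‖) / Real.sqrt z.im := by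
      rw [le_div_iff₀ hs]
      nlinarith [hq z hz, norm_nonneg (q z / e z)]

end S11

/-- `h` is associated to `B(e)`: for every `f ∈ B(e)` and `w` with `f w ≠ 0`, the entire
function `z ↦ (f(z)h(w) − f(w)h(z))/(z − w)` (extended across the removable singularity
at `w`) belongs to `B(e)`. -/
def AssocCond (e h : ℂ → ℂ) : Prop :=
  ∀ (f : ℂ → ℂ) (w : ℂ), MemDB e f → f w ≠ 0 →
    ∃ g : ℂ → ℂ, (∀ z : ℂ, z ≠ w → g z = (f z * h w - f w * h z) / (z - w)) ∧ MemDB e g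

/-- An entire function `h` is associated to `B(e)` iff
`h ∈ B(e) + z·B(e)`. -/
theorem statement11 (e h : ℂ → ℂ) (he : IsHB e) (hh : Differentiable ℂ h) :
    AssocCond e h ↔
      ∃ f g : ℂ → ℂ, MemDB e f ∧ MemDB e g ∧ ∀ z : ℂ, h z = f z + z * g z := by
  constructor
  · -- forward
    intro hA
    set N : ℂ → ℂ := fun z => fsharp e z * e (-Complex.I) - e z * fsharp e (-Complex.I) with hN
    have hNd : Differentiable ℂ N :=
      ((S11.differentiable_fsharp he.1).mul_const _).sub (he.1.mul_const _)
    have hNw : N (-Complex.I) = 0 := by simp only [hN]; ring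
    set C₀ : ℝ := ‖e (-Complex.I)‖ + ‖e Complex.I‖ with hC₀
    have hC₀0 : 0 ≤ C₀ := add_nonneg (norm_nonneg _) (norm_nonneg _)
    have hsharpI : ‖fsharp e (-Complex.I)‖ = ‖e Complex.I‖ := by
      rw [S11.abs_fsharp]
      norm_num
    have hNabs : ∀ z : ℂ, ‖N z‖
        ≤ ‖fsharp e z‖ * ‖e (-Complex.I)‖
          + ‖e z‖ * ‖e Complex.I‖ := by
      intro z
      simp only [hN]
      refine le_trans (S11.abs_sub_le' _ _) ?_
      rw [norm_mul, norm_mul, hsharpI]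
    -- bound on ℝ
    have hNreal : ∀ x : ℝ, ‖N x / e x‖ ≤ C₀ := by
      intro x
      by_cases hex : e (x : ℂ) = 0
      · rw [hex]
        simpa using hC₀0
      · rw [norm_div, div_le_iff₀ (norm_pos_iff.2 hex)]
        have h1 : ‖fsharp e x‖ = ‖e x‖ := by
          rw [S11.abs_fsharp]
          norm_num [Complex.conj_ofReal]
        calc ‖N x‖ ≤ ‖fsharp e x‖ * ‖e (-Complex.I)‖
              + ‖e x‖ * ‖e Complex.I‖ := hNabs x
        _ = C₀ * ‖e x‖ := by rw [h1, hC₀]; ring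
    have hNupper : ∀ z : ℂ, 0 < z.im → ‖N z / e z‖ ≤ C₀ := by
      intro z hz
      have hez := S11.hb_ne he hz
      rw [norm_div, div_le_iff₀ (norm_pos_iff.2 hez)]
      have h1 : ‖fsharp e z‖ ≤ ‖e z‖ := by
        rw [S11.abs_fsharp]
        exact (he.2 z hz).le
      calc ‖N z‖ ≤ ‖fsharp e z‖ * ‖e (-Complex.I)‖
            + ‖e z‖ * ‖e Complex.I‖ := hNabs z
      _ ≤ ‖e z‖ * ‖e (-Complex.I)‖
            + ‖e z‖ * ‖e Complex.I‖ := by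
          have := mul_le_mul_of_nonneg_right h1 (norm_nonneg (e (-Complex.I)))
          linarith
      _ = C₀ * ‖e z‖ := by rw [hC₀]; ring
    have hNupper' : ∀ z : ℂ, 0 < z.im → ‖fsharp N z / e z‖ ≤ C₀ := by
      intro z hz
      have hez := S11.hb_ne he hz
      rw [norm_div, div_le_iff₀ (norm_pos_iff.2 hez)]
      rw [S11.abs_fsharp]
      have h2 : ‖fsharp e ((starRingEnd ℂ) z)‖ = ‖e z‖ := by
        rw [S11.abs_fsharp, Complex.conj_conj]
      have h3 : ‖e ((starRingEnd ℂ) z)‖ ≤ ‖e z‖ := (he.2 z hz).le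
      calc ‖N ((starRingEnd ℂ) z)‖
          ≤ ‖fsharp e ((starRingEnd ℂ) z)‖ * ‖e (-Complex.I)‖
            + ‖e ((starRingEnd ℂ) z)‖ * ‖e Complex.I‖ := hNabs _
      _ ≤ ‖e z‖ * ‖e (-Complex.I)‖
            + ‖e z‖ * ‖e Complex.I‖ := by
          rw [h2]
          have := mul_le_mul_of_nonneg_right h3 (norm_nonneg (e Complex.I))
          linarith
      _ = C₀ * ‖e z‖ := by rw [hC₀]; ring
    -- integrability for N
    have hNint : Integrable (fun x : ℝ => (‖N x / e x‖ / (1 + |x|)) ^ 2) := by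
      apply Integrable.mono' (integrable_inv_one_add_sq.const_mul (C₀ ^ 2))
        (S11.aesm2 he.1.continuous hNd.continuous)
      filter_upwards with x
      rw [Real.norm_eq_abs, _root_.abs_of_nonneg (by positivity)]
      have hx1 : (0 : ℝ) < 1 + |x| := by positivity
      have h1 : ‖N x / e x‖ / (1 + |x|) ≤ C₀ / (1 + |x|) := by
        gcongr
        exact hNreal x
      have h2 : (‖N x / e x‖ / (1 + |x|)) ^ 2 ≤ (C₀ / (1 + |x|)) ^ 2 :=
        pow_le_pow_left₀ (by positivity) h1 2
      have h3 : (C₀ / (1 + |x|)) ^ 2 ≤ C₀ ^ 2 * (1 + x ^ 2)⁻¹ := by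
        rw [div_pow, ← div_eq_mul_inv]
        apply _root_.div_le_div_of_nonneg_left (sq_nonneg _) (by positivity)
        nlinarith [abs_nonneg x, _root_.sq_abs x]
      linarith
    have hK := S11.core he hNd hNw hNint hC₀0 (S11.const_to_std hC₀0 hNupper)
      (S11.const_to_std hC₀0 hNupper') (Or.inl (by simp)) (Or.inl (by simp))
    -- K I ≠ 0
    have hIne : Complex.I ≠ -Complex.I := by
      intro hI
      have := congrArg Complex.im hI
      norm_num at this
    have hval : dslope N (-Complex.I) Complex.I = N Complex.I / (2 * Complex.I) := by
      rw [dslope_of_ne _ hIne, slope_def_field, hNw, sub_zero]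
      congr 1
      ring
    have hNI : N Complex.I
        = (Complex.normSq (e (-Complex.I)) : ℂ) - (Complex.normSq (e Complex.I) : ℂ) := by
      simp only [hN]
      have e1 : fsharp e Complex.I = (starRingEnd ℂ) (e (-Complex.I)) := by
        simp [fsharp]
      have e2 : fsharp e (-Complex.I) = (starRingEnd ℂ) (e Complex.I) := by
        simp [fsharp]
      rw [e1, e2, mul_comm ((starRingEnd ℂ) (e (-Complex.I))) (e (-Complex.I)),
        Complex.mul_conj, Complex.mul_conj]
    have hlt : Complex.normSq (e (-Complex.I)) < Complex.normSq (e Complex.I) := by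
      have h0 := he.2 Complex.I (by simp)
      rw [show (starRingEnd ℂ) Complex.I = -Complex.I by simp] at h0
      rw [← Complex.sq_norm, ← Complex.sq_norm]
      exact pow_lt_pow_left₀ h0 (norm_nonneg _) two_ne_zero
    have hKI : dslope N (-Complex.I) Complex.I ≠ 0 := by
      rw [hval]
      apply div_ne_zero
      · rw [hNI, ← Complex.ofReal_sub]
        exact Complex.ofReal_ne_zero.2 (sub_ne_zero.2 hlt.ne)
      · simp [Complex.I_ne_zero]
    obtain ⟨g₁, hg₁eq, hg₁mem⟩ := hA (dslope N (-Complex.I)) Complex.I hK hKI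
    set KI := dslope N (-Complex.I) Complex.I with hKIdef
    refine ⟨fun z => KI⁻¹ * h Complex.I * dslope N (-Complex.I) z + KI⁻¹ * Complex.I * g₁ z,
      fun z => -KI⁻¹ * g₁ z,
      S11.memDB_add he (S11.memDB_const_mul he _ hK) (S11.memDB_const_mul he _ hg₁mem),
      S11.memDB_const_mul he _ hg₁mem, ?_⟩
    have hcont2 : Continuous fun z =>
        (KI⁻¹ * h Complex.I * dslope N (-Complex.I) z + KI⁻¹ * Complex.I * g₁ z)
          + z * (-KI⁻¹ * g₁ z) := by
      have c1 := (S11.diff_dslope hNd (-Complex.I)).continuous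
      have c2 := hg₁mem.1.continuous
      exact ((continuous_const.mul c1).add (continuous_const.mul c2)).add
        (continuous_id.mul (continuous_const.mul c2))
    have heqon : Set.EqOn h (fun z =>
        (KI⁻¹ * h Complex.I * dslope N (-Complex.I) z + KI⁻¹ * Complex.I * g₁ z)
          + z * (-KI⁻¹ * g₁ z)) {Complex.I}ᶜ := by
      intro z hz
      have hzI : z ≠ Complex.I := hz
      have hzI' : z - Complex.I ≠ 0 := sub_ne_zero.2 hzI
      have hgz := hg₁eq z hzI
      simp only
      rw [hgz]
      field_simp
      ring
    have hfinal := Continuous.ext_on (dense_compl_singleton Complex.I) hh.continuous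
      hcont2 heqon
    intro z
    exact congrFun hfinal z
  · -- reverse
    rintro ⟨f₀, g₀, hf₀, hg₀, hrep⟩
    intro f w hf hfw
    obtain ⟨c₁, hc₁, hb₁⟩ := hf.2.2
    obtain ⟨c₂, hc₂, hb₂⟩ := hf₀.2.2
    obtain ⟨c₃, hc₃, hb₃⟩ := hg₀.2.2
    have hw1 : w.im ≠ 0 ∨ e w ≠ 0 := by
      rcases eq_or_ne w.im 0 with h0 | h0
      · exact Or.inr (S11.real_ne he hf h0 hfw)
      · exact Or.inl h0
    have hw2 : ((starRingEnd ℂ) w).im ≠ 0 ∨ e ((starRingEnd ℂ) w) ≠ 0 := by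
      rcases eq_or_ne w.im 0 with h0 | h0
      · right
        rw [Complex.conj_eq_iff_im.2 h0]
        exact S11.real_ne he hf h0 hfw
      · left
        rw [Complex.conj_im]
        simpa using h0
    set P : ℂ → ℂ := fun z => h w * f z - f w * h z with hP
    have hPd : Differentiable ℂ P := (hf.1.const_mul _).sub (hh.const_mul _)
    have hPw : P w = 0 := by simp only [hP]; ring
    have hsh : ∀ z : ℂ, fsharp h z = fsharp f₀ z + z * fsharp g₀ z := by
      intro z
      simp only [fsharp, hrep ((starRingEnd ℂ) z), map_add, map_mul, Complex.conj_conj]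
    have hshP : ∀ z : ℂ, fsharp P z = (starRingEnd ℂ) (h w) * fsharp f z
        - (starRingEnd ℂ) (f w) * fsharp h z := by
      intro z
      simp only [hP, fsharp, map_sub, map_mul]
    have habs_h : ∀ z : ℂ, ‖h z / e z‖
        ≤ ‖f₀ z / e z‖ + ‖z‖ * ‖g₀ z / e z‖ := by
      intro z
      have heq : h z / e z = f₀ z / e z + z * (g₀ z / e z) := by
        rw [hrep z]; ring
      rw [heq]
      refine le_trans (norm_add_le _ _) ?_
      rw [norm_mul]
    have habs_hs : ∀ z : ℂ, ‖fsharp h z / e z‖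
        ≤ ‖fsharp f₀ z / e z‖ + ‖z‖ * ‖fsharp g₀ z / e z‖ := by
      intro z
      have heq : fsharp h z / e z = fsharp f₀ z / e z + z * (fsharp g₀ z / e z) := by
        rw [hsh z]; ring
      rw [heq]
      refine le_trans (norm_add_le _ _) ?_
      rw [norm_mul]
    have habs_P : ∀ z : ℂ, ‖P z / e z‖
        ≤ ‖h w‖ * ‖f z / e z‖
          + ‖f w‖ * ‖h z / e z‖ := by
      intro z
      have heq : P z / e z = h w * (f z / e z) - f w * (h z / e z) := by
        simp only [hP]; ring
      rw [heq]
      refine le_trans (S11.abs_sub_le' _ _) ?_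
      rw [norm_mul, norm_mul]
    have habs_Ps : ∀ z : ℂ, ‖fsharp P z / e z‖
        ≤ ‖h w‖ * ‖fsharp f z / e z‖
          + ‖f w‖ * ‖fsharp h z / e z‖ := by
      intro z
      have heq : fsharp P z / e z = (starRingEnd ℂ) (h w) * (fsharp f z / e z)
          - (starRingEnd ℂ) (f w) * (fsharp h z / e z) := by
        rw [hshP z]; ring
      rw [heq]
      refine le_trans (S11.abs_sub_le' _ _) ?_
      rw [norm_mul, norm_mul, Complex.norm_conj, Complex.norm_conj]
    -- integrability
    have hInt : Integrable (fun x : ℝ => (‖P x / e x‖ / (1 + |x|)) ^ 2) := by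
      have hDint : Integrable (fun x : ℝ =>
          3 * (‖h w‖ ^ 2 * ‖f x / e x‖ ^ 2)
          + (3 * (‖f w‖ ^ 2 * ‖f₀ x / e x‖ ^ 2)
          + 3 * (‖f w‖ ^ 2 * ‖g₀ x / e x‖ ^ 2))) :=
        ((hf.2.1.const_mul _).const_mul 3).add
          (((hf₀.2.1.const_mul _).const_mul 3).add ((hg₀.2.1.const_mul _).const_mul 3))
      apply Integrable.mono' hDint (S11.aesm2 he.1.continuous hPd.continuous)
      filter_upwards with x
      rw [Real.norm_eq_abs, _root_.abs_of_nonneg (by positivity)]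
      have hx1 : (0 : ℝ) < 1 + |x| := by positivity
      have l2 := habs_P x
      have l3 := habs_h x
      rw [Complex.norm_real, Real.norm_eq_abs] at l3
      have l4 : ‖f w‖ * ‖h x / e x‖
          ≤ ‖f w‖ * (‖f₀ x / e x‖ + |x| * ‖g₀ x / e x‖) :=
        mul_le_mul_of_nonneg_left l3 (norm_nonneg _)
      have l1 : ‖P x / e x‖ / (1 + |x|)
          ≤ ‖h w‖ * ‖f x / e x‖
            + (‖f w‖ * ‖f₀ x / e x‖
              + ‖f w‖ * ‖g₀ x / e x‖) := by
        rw [div_le_iff₀ hx1]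
        nlinarith [mul_nonneg (mul_nonneg (norm_nonneg (h w))
            (norm_nonneg (f x / e x))) (abs_nonneg x),
          mul_nonneg (mul_nonneg (norm_nonneg (f w))
            (norm_nonneg (f₀ x / e x))) (abs_nonneg x),
          mul_nonneg (norm_nonneg (f w)) (norm_nonneg (g₀ x / e x))]
      have lnn : 0 ≤ ‖P x / e x‖ / (1 + |x|) := by positivity
      have lsq := pow_le_pow_left₀ lnn l1 2
      nlinarith [lsq,
        sq_nonneg (‖h w‖ * ‖f x / e x‖
          - ‖f w‖ * ‖f₀ x / e x‖),
        sq_nonneg (‖h w‖ * ‖f x / e x‖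
          - ‖f w‖ * ‖g₀ x / e x‖),
        sq_nonneg (‖f w‖ * ‖f₀ x / e x‖
          - ‖f w‖ * ‖g₀ x / e x‖)]
    -- UHP bounds
    have hcnn : 0 ≤ ‖h w‖ * c₁ + ‖f w‖ * (c₂ + c₃) := by positivity
    have hbdP : ∀ z : ℂ, 0 < z.im → ‖P z / e z‖
        ≤ (‖h w‖ * c₁ + ‖f w‖ * (c₂ + c₃)) * (1 + ‖z‖)
          / Real.sqrt z.im := by
      intro z hz
      have hs : 0 < Real.sqrt z.im := Real.sqrt_pos.2 hz
      rw [le_div_iff₀ hs]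
      have e1' : ‖f z / e z‖ * Real.sqrt z.im ≤ c₁ := by
        rw [← le_div_iff₀ hs]; exact (hb₁ z hz).1
      have e2' : ‖f₀ z / e z‖ * Real.sqrt z.im ≤ c₂ := by
        rw [← le_div_iff₀ hs]; exact (hb₂ z hz).1
      have e3' : ‖g₀ z / e z‖ * Real.sqrt z.im ≤ c₃ := by
        rw [← le_div_iff₀ hs]; exact (hb₃ z hz).1
      have A1 := mul_le_mul_of_nonneg_right (habs_P z) hs.le
      have A2 := mul_le_mul_of_nonneg_right (habs_h z) hs.le
      have m1 := mul_le_mul_of_nonneg_left e1' (norm_nonneg (h w))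
      have m2 := mul_le_mul_of_nonneg_left A2 (norm_nonneg (f w))
      have m3 := mul_le_mul_of_nonneg_left e2' (norm_nonneg (f w))
      have m4 := mul_le_mul_of_nonneg_left
        (mul_le_mul_of_nonneg_left e3' (norm_nonneg z)) (norm_nonneg (f w))
      linarith [A1, m1, m2, m3, m4,
        mul_nonneg (mul_nonneg (norm_nonneg z) (norm_nonneg (h w))) hc₁,
        mul_nonneg (mul_nonneg (norm_nonneg z) (norm_nonneg (f w))) hc₂,
        mul_nonneg (norm_nonneg (f w)) hc₃]
    have hbdPs : ∀ z : ℂ, 0 < z.im → ‖fsharp P z / e z‖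
        ≤ (‖h w‖ * c₁ + ‖f w‖ * (c₂ + c₃)) * (1 + ‖z‖)
          / Real.sqrt z.im := by
      intro z hz
      have hs : 0 < Real.sqrt z.im := Real.sqrt_pos.2 hz
      rw [le_div_iff₀ hs]
      have e1' : ‖fsharp f z / e z‖ * Real.sqrt z.im ≤ c₁ := by
        rw [← le_div_iff₀ hs]; exact (hb₁ z hz).2
      have e2' : ‖fsharp f₀ z / e z‖ * Real.sqrt z.im ≤ c₂ := by
        rw [← le_div_iff₀ hs]; exact (hb₂ z hz).2
      have e3' : ‖fsharp g₀ z / e z‖ * Real.sqrt z.im ≤ c₃ := by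
        rw [← le_div_iff₀ hs]; exact (hb₃ z hz).2
      have A1 := mul_le_mul_of_nonneg_right (habs_Ps z) hs.le
      have A2 := mul_le_mul_of_nonneg_right (habs_hs z) hs.le
      have m1 := mul_le_mul_of_nonneg_left e1' (norm_nonneg (h w))
      have m2 := mul_le_mul_of_nonneg_left A2 (norm_nonneg (f w))
      have m3 := mul_le_mul_of_nonneg_left e2' (norm_nonneg (f w))
      have m4 := mul_le_mul_of_nonneg_left
        (mul_le_mul_of_nonneg_left e3' (norm_nonneg z)) (norm_nonneg (f w))
      linarith [A1, m1, m2, m3, m4,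
        mul_nonneg (mul_nonneg (norm_nonneg z) (norm_nonneg (h w))) hc₁,
        mul_nonneg (mul_nonneg (norm_nonneg z) (norm_nonneg (f w))) hc₂,
        mul_nonneg (norm_nonneg (f w)) hc₃]
    refine ⟨dslope P w, fun z hz => ?_, S11.core he hPd hPw hInt hcnn hbdP hbdPs hw1 hw2⟩
    rw [dslope_of_ne _ hz, slope_def_field, hPw, sub_zero]
    simp only [hP]
    rw [show h w * f z - f w * h z = f z * h w - f w * h z from by ring]
end
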